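/- arXiv:2008.01379 — 14 statements merged into one kernel-verified Lean document; each statement's English description precedes it below -/
import Mathlib

section
/- Let Γ be a group and S a Γ-graded semigroup. Then there exists a Γ-graded pointed set X and an injective semigroup homomorphism ψ : S → T^gr(X) which is graded, i.e. ψ(S_α) ⊆ T(X)_α for every α ∈ Γ. (Concretely one may take X = S ∪ {1} with the induced grading and ψ(s) the left translation by s.) -/
/-- A `Γ`-grading on a semigroup with zero `S`: a degree map (here implemented as a total
map, whose value on `0` is irrelevant since the components below always contain `0`),
multiplicative on nonzero products. -/
structure Grading (Γ : Type*) [Group Γ] (S : Type*) [SemigroupWithZero S] where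
  deg : S → Γ
  deg_mul : ∀ s t : S, s * t ≠ 0 → deg (s * t) = deg s * deg t

namespace Grading

variable {Γ : Type*} [Group Γ] {S : Type*} [SemigroupWithZero S]

/-- The component `S_α = φ⁻¹(α) ∪ {0}` of a `Γ`-graded semigroup. -/
def comp (g : Grading Γ S) (α : Γ) : Set S := {s | s = 0 ∨ g.deg s = α}

end Grading

/-- **Graded representation theorem** (Proposition `gradedrepresentationthrm`):
every `Γ`-graded semigroup `S` admits a graded injective homomorphism into the graded
transformation semigroup `𝒯^gr(X)` of some `Γ`-graded pointed set `X`.  Here the target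
is described concretely: `ψ s` is a pointed self-map of `X` (i.e. an element of
`𝒯'(X)`), `ψ` is an injective semigroup homomorphism, and for every `α ∈ Γ` and
`s ∈ S_α` the map `ψ s` sends `X_β` into `X_{αβ}` for every `β`, i.e.
`ψ(S_α) ⊆ 𝒯(X)_α`. -/
theorem graded_representation {Γ : Type u} [Group Γ] {S : Type v} [SemigroupWithZero S]
    (g : Grading Γ S) :
    ∃ (X : Type v) (zX : X) (degX : X → Γ) (ψ : S → X → X),
      Function.Injective ψ ∧
      (∀ s t : S, ψ (s * t) = ψ s ∘ ψ t) ∧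
      (∀ s : S, ψ s zX = zX) ∧
      (∀ (α : Γ) (s : S), s ∈ g.comp α → ∀ (β : Γ) (x : X),
        (x = zX ∨ degX x = β) → (ψ s x = zX ∨ degX (ψ s x) = α * β)) := by
  refine ⟨Option S, some 0, fun x => match x with | none => 1 | some t => g.deg t,
    fun s x => match x with | none => some s | some t => some (s * t), ?_, ?_, ?_, ?_⟩
  · intro s t h
    have := congrFun h none
    simpa using this
  · intro s t
    funext x
    cases x with
    | none => rfl
    | some u => simp [mul_assoc]
  · intro s; simp
  · rintro α s hs β x hx
    cases x with
    | none =>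
      rcases hx with hx | hx
      · exact absurd hx (by simp)
      · rcases hs with hs | hs
        · left; simp [hs]
        · right; simpa [hs] using hx.symm
    | some t =>
      by_cases hst : s * t = 0
      · left; simp [hst]
      · right
        have ht : t ≠ 0 := fun h => hst (by simp [h])
        have hs0 : s ≠ 0 := fun h => hst (by simp [h])
        rcases hs with hs | hs
        · exact absurd hs hs0
        rcases hx with hx | hx
        · exact absurd (by simpa using hx) ht
        · simpa [g.deg_mul s t hst, hs] using congrArg (α * ·) hx
end

section
/- Let S be a Γ-graded inverse semigroup. Then S is 0-E-unitary if and only if the inverse semigroup S_ε is 0-E-unitary. -/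
/-- A `Γ`-graded inverse semigroup `S` is `0`-`E`-unitary if and only if the inverse
semigroup `S_ε` is `0`-`E`-unitary.  Here `u ≤ s` in the natural partial order is
expressed as `∃ e, e * e = e ∧ u = s * e`, idempotents are the `u` with `u * u = u`,
and `0`-`E`-unitarity of `S_ε` is expressed for elements of the component `S_ε = comp 1`
(note that all idempotents of `S` lie in `S_ε`, so `E(S_ε) = E(S)`). -/
theorem zeroEUnitary_iff_component {Γ : Type u} [Group Γ] {S : Type v}
    [SemigroupWithZero S] (g : Grading Γ S)
    (hinv : ∀ s : S, ∃! t : S, s * t * s = s ∧ t * s * t = t) :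
    (∀ s u : S, u * u = u → u ≠ 0 → (∃ e : S, e * e = e ∧ u = s * e) → s * s = s) ↔
      (∀ s ∈ g.comp 1, ∀ u : S, u * u = u → u ≠ 0 →
        (∃ e : S, e * e = e ∧ u = s * e) → s * s = s) := by
  constructor
  · intro h s _ u hu hu0 hle
    exact h s u hu hu0 hle
  · intro h s u hu hu0 hle
    obtain ⟨e, he, hue⟩ := hle
    have he0 : e ≠ 0 := by
      rintro rfl
      exact hu0 (by simpa [hue] using hue)
    have hs0 : s ≠ 0 := by
      rintro rfl
      exact hu0 (by simpa using hue)
    have hse0 : s * e ≠ 0 := hue ▸ hu0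
    have hdu : g.deg u = 1 := by
      have := g.deg_mul u u (hu.symm ▸ hu0)
      rw [hu] at this
      exact mul_left_cancel (a := g.deg u) (by simpa using this.symm)
    have hde : g.deg e = 1 := by
      have := g.deg_mul e e (he.symm ▸ he0)
      rw [he] at this
      exact mul_left_cancel (a := g.deg e) (by simpa using this.symm)
    have hds : g.deg s = 1 := by
      have := g.deg_mul s e hse0
      rw [← hue, hdu, hde, mul_one] at this
      exact this.symm
    exact h s (Or.inr hds) u hu hu0 ⟨e, he, hue⟩
end

section
/- Let S be a Γ-graded regular semigroup. Then the map sending each left ideal I of S to I_ε := S_ε ∩ I is a one-to-one, inclusion-preserving correspondence between the left ideals of S and the left ideals of S_ε, with inverse J ↦ SJ; the analogous statement holds for right ideals. -/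
open Pointwise

namespace Grading

variable {Γ : Type*} [Group Γ] {S : Type*} [SemigroupWithZero S]

/-- A left ideal of the subsemigroup `S_ε`: a nonempty subset of `S_ε` closed under
left multiplication by elements of `S_ε`. -/
def IsLeftIdealOfEps (g : Grading Γ S) (J : Set S) : Prop :=
  J ⊆ g.comp 1 ∧ J.Nonempty ∧ ∀ s ∈ g.comp 1, ∀ x ∈ J, s * x ∈ J

/-- A right ideal of the subsemigroup `S_ε`. -/
def IsRightIdealOfEps (g : Grading Γ S) (J : Set S) : Prop :=
  J ⊆ g.comp 1 ∧ J.Nonempty ∧ ∀ s ∈ g.comp 1, ∀ x ∈ J, x * s ∈ J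

end Grading

/-- A left ideal of `S`: a nonempty subset with `SI ⊆ I`. -/
def IsLeftIdeal (S : Type v) [SemigroupWithZero S] (I : Set S) : Prop :=
  I.Nonempty ∧ ∀ s x : S, x ∈ I → s * x ∈ I

/-- A right ideal of `S`: a nonempty subset with `IS ⊆ I`. -/
def IsRightIdeal (S : Type v) [SemigroupWithZero S] (I : Set S) : Prop :=
  I.Nonempty ∧ ∀ s x : S, x ∈ I → x * s ∈ I

/-- For a `Γ`-graded regular semigroup `S`, the map `I ↦ I_ε := S_ε ∩ I` is a one-to-one
inclusion-preserving correspondence between the left (resp. right) ideals of `S` and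
those of `S_ε`, with inverse `J ↦ SJ` (resp. `J ↦ JS`). -/
theorem graded_ideal_correspondence {Γ : Type u} [Group Γ] {S : Type v}
    [SemigroupWithZero S] (g : Grading Γ S)
    (hreg : ∀ s : S, ∃ t : S, s * t * s = s) :
    ((∀ I : Set S, IsLeftIdeal S I → g.IsLeftIdealOfEps (g.comp 1 ∩ I)) ∧
     (∀ J : Set S, g.IsLeftIdealOfEps J → IsLeftIdeal S (Set.univ * J)) ∧
     (∀ I : Set S, IsLeftIdeal S I → Set.univ * (g.comp 1 ∩ I) = I) ∧
     (∀ J : Set S, g.IsLeftIdealOfEps J → g.comp 1 ∩ (Set.univ * J) = J) ∧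
     (∀ I I' : Set S, IsLeftIdeal S I → IsLeftIdeal S I' → I ⊆ I' →
        g.comp 1 ∩ I ⊆ g.comp 1 ∩ I')) ∧
    ((∀ I : Set S, IsRightIdeal S I → g.IsRightIdealOfEps (g.comp 1 ∩ I)) ∧
     (∀ J : Set S, g.IsRightIdealOfEps J → IsRightIdeal S (J * Set.univ)) ∧
     (∀ I : Set S, IsRightIdeal S I → (g.comp 1 ∩ I) * Set.univ = I) ∧
     (∀ J : Set S, g.IsRightIdealOfEps J → g.comp 1 ∩ (J * Set.univ) = J) ∧
     (∀ I I' : Set S, IsRightIdeal S I → IsRightIdeal S I' → I ⊆ I' →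
        g.comp 1 ∩ I ⊆ g.comp 1 ∩ I')) := by
  have h0 : (0:S) ∈ g.comp 1 := Or.inl rfl
  constructor
  · refine ⟨?_, ?_, ?_, ?_, ?_⟩
    · intro I hI
      have h0I : (0:S) ∈ I := by
        obtain ⟨x, hx⟩ := hI.1
        simpa using hI.2 0 x hx
      refine ⟨Set.inter_subset_left, ⟨0, h0, h0I⟩, ?_⟩
      rintro s hs x ⟨hx1, hx2⟩
      refine ⟨?_, hI.2 s x hx2⟩
      by_cases h : s * x = 0
      · exact Or.inl h
      · right
        rcases hs with rfl | hs
        · simp at h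
        rcases hx1 with rfl | hx1
        · simp at h
        rw [g.deg_mul s x h, hs, hx1, one_mul]
    · intro J hJ
      obtain ⟨hJsub, ⟨x, hx⟩, hJcl⟩ := hJ
      refine ⟨⟨0 * x, Set.mul_mem_mul (Set.mem_univ 0) hx⟩, ?_⟩
      intro s a ha
      rw [Set.mem_mul] at ha ⊢
      obtain ⟨u, hu, y, hy, rfl⟩ := ha
      exact ⟨s * u, Set.mem_univ _, y, hy, mul_assoc s u y⟩
    · intro I hI
      apply Set.Subset.antisymm
      · intro a ha
        rw [Set.mem_mul] at ha
        obtain ⟨u, -, y, ⟨-, hyI⟩, rfl⟩ := ha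
        exact hI.2 u y hyI
      · intro a haI
        rw [Set.mem_mul]
        by_cases h : a = 0
        · subst h
          exact ⟨0, Set.mem_univ _, 0, ⟨h0, haI⟩, by simp⟩
        · obtain ⟨t, ht⟩ := hreg a
          have hta : a * (t * a) = a := by rw [← mul_assoc, ht]
          have hne : t * a ≠ 0 := by
            intro h'
            exact h (by rw [← hta, h', mul_zero])
          have hdeg : (t * a) ∈ g.comp 1 := by
            right
            have hd := g.deg_mul a (t * a) (by rw [hta]; exact h)
            rw [hta] at hd
            exact mul_left_cancel (show g.deg a * g.deg (t*a) = g.deg a * 1 by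
              rw [← hd, mul_one])
          exact ⟨a, Set.mem_univ _, t * a, ⟨hdeg, hI.2 t a haI⟩, hta⟩
    · intro J hJ
      obtain ⟨hJsub, ⟨y, hy⟩, hJcl⟩ := hJ
      have h0J : (0:S) ∈ J := by simpa using hJcl 0 h0 y hy
      apply Set.Subset.antisymm
      · rintro a ⟨ha1, hmul⟩
        rw [Set.mem_mul] at hmul
        obtain ⟨s, -, x, hxJ, rfl⟩ := hmul
        by_cases h : s * x = 0
        · rw [h]; exact h0J
        · have hx0 : x ≠ 0 := by rintro rfl; simp at h
          have hdx : g.deg x = 1 := (hJsub hxJ).resolve_left hx0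
          have hda : g.deg (s * x) = 1 := ha1.resolve_left h
          have hs : s ∈ g.comp 1 := by
            right
            have hd := g.deg_mul s x h
            rw [hda, hdx, mul_one] at hd
            exact hd.symm
          exact hJcl s hs x hxJ
      · intro x hxJ
        refine ⟨hJsub hxJ, ?_⟩
        obtain ⟨t, ht⟩ := hreg x
        exact Set.mem_mul.2 ⟨x * t, Set.mem_univ _, x, hxJ, ht⟩
    · rintro I I' _ _ hsub a ⟨h1, h2⟩
      exact ⟨h1, hsub h2⟩
  · refine ⟨?_, ?_, ?_, ?_, ?_⟩
    · intro I hI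
      have h0I : (0:S) ∈ I := by
        obtain ⟨x, hx⟩ := hI.1
        simpa using hI.2 0 x hx
      refine ⟨Set.inter_subset_left, ⟨0, h0, h0I⟩, ?_⟩
      rintro s hs x ⟨hx1, hx2⟩
      refine ⟨?_, hI.2 s x hx2⟩
      by_cases h : x * s = 0
      · exact Or.inl h
      · right
        rcases hs with rfl | hs
        · simp at h
        rcases hx1 with rfl | hx1
        · simp at h
        rw [g.deg_mul x s h, hs, hx1, one_mul]
    · intro J hJ
      obtain ⟨hJsub, ⟨x, hx⟩, hJcl⟩ := hJ
      refine ⟨⟨x * 0, Set.mul_mem_mul hx (Set.mem_univ 0)⟩, ?_⟩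
      intro s a ha
      rw [Set.mem_mul] at ha ⊢
      obtain ⟨y, hy, u, hu, rfl⟩ := ha
      exact ⟨y, hy, u * s, Set.mem_univ _, (mul_assoc y u s).symm⟩
    · intro I hI
      apply Set.Subset.antisymm
      · intro a ha
        rw [Set.mem_mul] at ha
        obtain ⟨y, ⟨-, hyI⟩, u, -, rfl⟩ := ha
        exact hI.2 u y hyI
      · intro a haI
        rw [Set.mem_mul]
        by_cases h : a = 0
        · subst h
          exact ⟨0, ⟨h0, haI⟩, 0, Set.mem_univ _, by simp⟩
        · obtain ⟨t, ht⟩ := hreg a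
          have hne : a * t ≠ 0 := by
            intro h'
            exact h (by rw [← ht, h', zero_mul])
          have hdeg : (a * t) ∈ g.comp 1 := by
            right
            have hd := g.deg_mul (a * t) a (by rw [ht]; exact h)
            rw [ht] at hd
            exact mul_right_cancel (show g.deg (a*t) * g.deg a = 1 * g.deg a by
              rw [← hd, one_mul])
          exact ⟨a * t, ⟨hdeg, hI.2 t a haI⟩, a, Set.mem_univ _, ht⟩
    · intro J hJ
      obtain ⟨hJsub, ⟨y, hy⟩, hJcl⟩ := hJ
      have h0J : (0:S) ∈ J := by simpa using hJcl 0 h0 y hy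
      apply Set.Subset.antisymm
      · rintro a ⟨ha1, hmul⟩
        rw [Set.mem_mul] at hmul
        obtain ⟨x, hxJ, s, -, rfl⟩ := hmul
        by_cases h : x * s = 0
        · rw [h]; exact h0J
        · have hx0 : x ≠ 0 := by rintro rfl; simp at h
          have hdx : g.deg x = 1 := (hJsub hxJ).resolve_left hx0
          have hda : g.deg (x * s) = 1 := ha1.resolve_left h
          have hs : s ∈ g.comp 1 := by
            right
            have hd := g.deg_mul x s h
            rw [hda, hdx, one_mul] at hd
            exact hd.symm
          exact hJcl s hs x hxJ
      · intro x hxJ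
        refine ⟨hJsub hxJ, ?_⟩
        obtain ⟨t, ht⟩ := hreg x
        refine Set.mem_mul.2 ⟨x, hxJ, t * x, Set.mem_univ _, ?_⟩
        rw [← mul_assoc, ht]
    · rintro I I' _ _ hsub a ⟨h1, h2⟩
      exact ⟨h1, hsub h2⟩
end

section
/- Let S be a Γ-graded semigroup with local units. Then the following are equivalent: (1) S is strongly graded; (2) S_α S_{α⁻¹} = S_ε for every α ∈ Γ; (3) S_α S_{α⁻¹} contains all the local units of S, for every α ∈ Γ. Moreover, if S is an inverse semigroup, these are also equivalent to: (4) E(S) = {s s⁻¹ | s ∈ S_α} for every α ∈ Γ; (5) E(S) = {s⁻¹ s | s ∈ S_α} for every α ∈ Γ; (6) for all u ∈ E(S) and α ∈ Γ there exists s ∈ S_α with u 𝓛 s; (7) for all u ∈ E(S) and α ∈ Γ there exists s ∈ S_α with u 𝓡 s. -/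
open Pointwise

namespace Grading

variable {Γ : Type*} [Group Γ] {S : Type*} [SemigroupWithZero S]

/-- `S` is strongly graded if `S_α S_β = S_{αβ}` for all `α, β ∈ Γ`. -/
def IsStrong (g : Grading Γ S) : Prop :=
  ∀ α β : Γ, g.comp α * g.comp β = g.comp (α * β)

end Grading

/-- `S` has local units: every element has an idempotent left and right local unit. -/
def HasLocalUnits (S : Type*) [SemigroupWithZero S] : Prop :=
  ∀ s : S, ∃ u v : S, u * u = u ∧ v * v = v ∧ u * s = s ∧ s * v = s

/-- Green's `𝓛` relation: `s 𝓛 t` iff `S¹s = S¹t`. -/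
def GreenL (S : Type*) [SemigroupWithZero S] (s t : S) : Prop :=
  (s = t ∨ ∃ a : S, s = a * t) ∧ (t = s ∨ ∃ a : S, t = a * s)

/-- Green's `𝓡` relation: `s 𝓡 t` iff `sS¹ = tS¹`. -/
def GreenR (S : Type*) [SemigroupWithZero S] (s t : S) : Prop :=
  (s = t ∨ ∃ a : S, s = t * a) ∧ (t = s ∨ ∃ a : S, t = s * a)

section Aux

variable {Γ : Type*} [Group Γ] {S : Type*} [SemigroupWithZero S]

theorem aux_zero_mem (g : Grading Γ S) (α : Γ) : (0 : S) ∈ g.comp α := Or.inl rfl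

theorem aux_mem_mul (g : Grading Γ S) {α β : Γ} {s t : S}
    (hs : s ∈ g.comp α) (ht : t ∈ g.comp β) : s * t ∈ g.comp (α * β) := by
  rcases hs with hs | hs
  · exact Or.inl (by rw [hs, zero_mul])
  rcases ht with ht | ht
  · exact Or.inl (by rw [ht, mul_zero])
  by_cases h : s * t = 0
  · exact Or.inl h
  · exact Or.inr (by rw [g.deg_mul s t h, hs, ht])

theorem aux_idem_mem_one (g : Grading Γ S) {u : S} (hu : u * u = u) : u ∈ g.comp 1 := by
  by_cases h : u = 0
  · exact Or.inl h
  · refine Or.inr ?_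
    have h2 : g.deg (u * u) = g.deg u * g.deg u := g.deg_mul u u (by rw [hu]; exact h)
    rw [hu] at h2
    have := mul_left_cancel (a := g.deg u) (b := 1) (c := g.deg u) (by rw [mul_one, ← h2])
    exact this.symm

/-- Condition (3) implies strongly graded. -/
theorem aux_strong_of_cond3 (g : Grading Γ S) (hlu : HasLocalUnits S)
    (h3 : ∀ (α : Γ) (u : S), u * u = u → u ∈ g.comp α * g.comp α⁻¹) : g.IsStrong := by
  intro α β
  apply Set.Subset.antisymm
  · rintro x hx
    rw [Set.mem_mul] at hx
    obtain ⟨s, hs, t, ht, rfl⟩ := hx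
    exact aux_mem_mul g hs ht
  · intro x hx
    by_cases hx0 : x = 0
    · rw [Set.mem_mul]
      exact ⟨0, aux_zero_mem g α, 0, aux_zero_mem g β, by rw [hx0, mul_zero]⟩
    obtain ⟨u, v, hu, hv, hux, hxv⟩ := hlu x
    obtain ⟨s, hs, t, ht, hst⟩ := Set.mem_mul.mp (h3 α u hu)
    rw [Set.mem_mul]
    refine ⟨s, hs, t * x, ?_, ?_⟩
    · have := aux_mem_mul g ht hx
      rwa [inv_mul_cancel_left] at this
    · rw [← mul_assoc, hst, hux]

theorem aux_cond3_of_strong (g : Grading Γ S) (hst : g.IsStrong) :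
    ∀ (α : Γ) (u : S), u * u = u → u ∈ g.comp α * g.comp α⁻¹ := by
  intro α u hu
  rw [hst α α⁻¹, mul_inv_cancel]
  exact aux_idem_mem_one g hu

end Aux

section Inverse

variable {S : Type*} [SemigroupWithZero S] (inv : S → S)
  (hinv : ∀ s : S, s * inv s * s = s ∧ inv s * s * inv s = inv s)
  (huniq : ∀ s t : S, s * t * s = s → t * s * t = t → t = inv s)

include hinv huniq

theorem aux_idem_inv {u : S} (hu : u * u = u) : inv u = u :=
  (huniq u u (by rw [hu, hu]) (by rw [hu, hu])).symm

theorem aux_inv_invol (s : S) : inv (inv s) = s :=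
  (huniq (inv s) s (hinv s).2 (hinv s).1).symm

theorem aux_idem_mul {e f : S} (he : e * e = e) (hf : f * f = f) :
    (e * f) * (e * f) = e * f := by
  set x := inv (e * f) with hxdef
  have h1 : (e * f) * x * (e * f) = e * f := (hinv (e * f)).1
  have h2 : x * (e * f) * x = x := (hinv (e * f)).2
  have he' : ∀ z : S, e * (e * z) = e * z := fun z => by rw [← mul_assoc, he]
  have hf' : ∀ z : S, f * (f * z) = f * z := fun z => by rw [← mul_assoc, hf]
  have h1' : e * (f * (x * (e * f))) = e * f := by
    simpa only [mul_assoc] using h1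
  have h2g : ∀ z : S, x * (e * (f * (x * z))) = x * z := by
    intro z
    conv_rhs => rw [← h2]
    simp only [mul_assoc]
  -- f * x * e is also an inverse of e * f
  have key1 : (e * f) * (f * x * e) * (e * f) = e * f := by
    simp only [mul_assoc, he', hf']
    exact h1'
  have key2 : (f * x * e) * (e * f) * (f * x * e) = f * x * e := by
    simp only [mul_assoc, he', hf']
    rw [h2g]
  have hfxe : f * x * e = x := huniq (e * f) (f * x * e) key1 key2
  -- hence x is idempotent
  have hxx : x * x = x := by
    conv_lhs => rw [← hfxe]
    simp only [mul_assoc]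
    rw [h2g, ← mul_assoc, hfxe]
  -- e * f is the inverse of x, and x is self-inverse
  have hef : e * f = inv x := huniq x (e * f) h2 h1
  rw [hef, aux_idem_inv inv hinv huniq hxx]
  exact hxx

theorem aux_idem_comm {e f : S} (he : e * e = e) (hf : f * f = f) :
    e * f = f * e := by
  have hef : (e * f) * (e * f) = e * f := aux_idem_mul inv hinv huniq he hf
  have hfe : (f * e) * (f * e) = f * e := aux_idem_mul inv hinv huniq hf he
  have k1 : (e * f) * (f * e) * (e * f) = e * f := by
    calc (e * f) * (f * e) * (e * f)
        = e * (f * f) * (e * e) * f := by simp only [mul_assoc]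
      _ = (e * f) * (e * f) := by rw [hf, he]; simp only [mul_assoc]
      _ = e * f := hef
  have k2 : (f * e) * (e * f) * (f * e) = f * e := by
    calc (f * e) * (e * f) * (f * e)
        = f * (e * e) * (f * f) * e := by simp only [mul_assoc]
      _ = (f * e) * (f * e) := by rw [he, hf]; simp only [mul_assoc]
      _ = f * e := hfe
  have : f * e = inv (e * f) := huniq (e * f) (f * e) k1 k2
  rw [this, aux_idem_inv inv hinv huniq hef]

theorem aux_inv_mul_rev (s t : S) : inv (s * t) = inv t * inv s := by
  have he : (t * inv t) * (t * inv t) = t * inv t := by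
    rw [← mul_assoc, (hinv t).1]
  have hf : (inv s * s) * (inv s * s) = inv s * s := by
    rw [← mul_assoc, (hinv s).2]
  have hcomm := aux_idem_comm inv hinv huniq he hf
  have k1 : (s * t) * (inv t * inv s) * (s * t) = s * t := by
    calc (s * t) * (inv t * inv s) * (s * t)
        = s * ((t * inv t) * (inv s * s)) * t := by simp only [mul_assoc]
      _ = s * ((inv s * s) * (t * inv t)) * t := by rw [hcomm]
      _ = (s * inv s * s) * (t * inv t * t) := by simp only [mul_assoc]
      _ = s * t := by rw [(hinv s).1, (hinv t).1]
  have k2 : (inv t * inv s) * (s * t) * (inv t * inv s) = inv t * inv s := by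
    calc (inv t * inv s) * (s * t) * (inv t * inv s)
        = inv t * ((inv s * s) * (t * inv t)) * inv s := by simp only [mul_assoc]
      _ = inv t * ((t * inv t) * (inv s * s)) * inv s := by rw [← hcomm]
      _ = (inv t * t * inv t) * (inv s * s * inv s) := by simp only [mul_assoc]
      _ = inv t * inv s := by rw [(hinv t).2, (hinv s).2]
  exact (huniq (s * t) (inv t * inv s) k1 k2).symm

theorem aux_inv_zero : inv (0 : S) = 0 :=
  (huniq 0 0 (by simp) (by simp)).symm

/-- An idempotent `𝓛`-related to `s` equals `inv s * s`. -/
theorem aux_greenL_idem {u s : S} (hu : u * u = u) (h : GreenL S u s) :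
    u = inv s * s := by
  have hee : (inv s * s) * (inv s * s) = inv s * s := by rw [← mul_assoc, (hinv s).2]
  have hue : u * (inv s * s) = u := by
    rcases h.1 with h1 | ⟨a, h1⟩
    · rw [h1, ← mul_assoc, (hinv s).1]
    · rw [h1, mul_assoc, ← mul_assoc s (inv s) s, (hinv s).1]
  have heu : (inv s * s) * u = inv s * s := by
    rcases h.2 with h1 | ⟨b, h1⟩
    · have hss : s * s = s := by rw [h1]; exact hu
      rw [← h1, mul_assoc, hss]
    · rw [h1, mul_assoc (inv (b * u)) (b * u) u, mul_assoc b u u, hu]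
  calc u = u * (inv s * s) := hue.symm
    _ = (inv s * s) * u := aux_idem_comm inv hinv huniq hu hee
    _ = inv s * s := heu

/-- An idempotent `𝓡`-related to `s` equals `s * inv s`. -/
theorem aux_greenR_idem {u s : S} (hu : u * u = u) (h : GreenR S u s) :
    u = s * inv s := by
  have hee : (s * inv s) * (s * inv s) = s * inv s := by rw [← mul_assoc, (hinv s).1]
  have heu : (s * inv s) * u = u := by
    rcases h.1 with h1 | ⟨a, h1⟩
    · rw [h1]; exact (hinv s).1
    · rw [h1, ← mul_assoc, (hinv s).1]
  have hue : u * (s * inv s) = s * inv s := by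
    rcases h.2 with h1 | ⟨b, h1⟩
    · have hss : s * s = s := by rw [h1]; exact hu
      rw [← h1, ← mul_assoc, hss]
    · rw [h1, ← mul_assoc, ← mul_assoc, hu]
  calc u = (s * inv s) * u := heu.symm
    _ = u * (s * inv s) := aux_idem_comm inv hinv huniq hee hu
    _ = s * inv s := hue

end Inverse

section InvGraded

variable {Γ : Type*} [Group Γ] {S : Type*} [SemigroupWithZero S]
  (g : Grading Γ S) (inv : S → S)
  (hinv : ∀ s : S, s * inv s * s = s ∧ inv s * s * inv s = inv s)
  (huniq : ∀ s t : S, s * t * s = s → t * s * t = t → t = inv s)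

include hinv huniq

theorem aux_inv_mem {α : Γ} {s : S} (hs : s ∈ g.comp α) : inv s ∈ g.comp α⁻¹ := by
  rcases hs with rfl | hs
  · rw [aux_inv_zero inv hinv huniq]; exact Or.inl rfl
  by_cases h0 : s = 0
  · rw [h0, aux_inv_zero inv hinv huniq]; exact Or.inl rfl
  by_cases hi0 : inv s = 0
  · exfalso; apply h0
    have := (hinv s).1
    rw [hi0, mul_zero, zero_mul] at this
    exact this.symm
  refine Or.inr ?_
  have hsi : s * inv s ≠ 0 := by
    intro h
    apply h0
    have := (hinv s).1
    rw [h, zero_mul] at this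
    exact this.symm
  have h1 : g.deg (s * inv s) = g.deg s * g.deg (inv s) := g.deg_mul s (inv s) hsi
  have h2 : g.deg (s * inv s * s) = g.deg (s * inv s) * g.deg s := by
    apply g.deg_mul
    rw [(hinv s).1]; exact h0
  rw [(hinv s).1, h1] at h2
  have h3 : g.deg s * g.deg (inv s) * g.deg s = 1 * g.deg s := by rw [one_mul, ← h2]
  have h4 : g.deg s * g.deg (inv s) = 1 := mul_right_cancel h3
  rw [← hs]
  exact (inv_eq_of_mul_eq_one_right h4).symm

/-- From condition (3), `E(S) = {s s⁻¹ | s ∈ S_α}`. -/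
theorem aux_E_eq (h3 : ∀ (α : Γ) (u : S), u * u = u → u ∈ g.comp α * g.comp α⁻¹) (α : Γ) :
    {u : S | u * u = u} = {x : S | ∃ s ∈ g.comp α, x = s * inv s} := by
  ext u
  constructor
  · intro hu
    obtain ⟨s, hs, t, ht, hst⟩ := Set.mem_mul.mp (h3 α u hu)
    refine ⟨s * (t * inv t), ?_, ?_⟩
    · have h1 : t * inv t ∈ g.comp (α⁻¹ * α⁻¹⁻¹) :=
        aux_mem_mul g ht (aux_inv_mem g inv hinv huniq ht)
      have h2 := aux_mem_mul g hs h1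
      rwa [mul_inv_cancel, mul_one] at h2
    · -- u = x * inv x where x = s * (t * inv t)
      have hite : (t * inv t) * (t * inv t) = t * inv t := by
        rw [← mul_assoc, (hinv t).1]
      have hxinv : inv (s * (t * inv t)) = (t * inv t) * inv s := by
        rw [aux_inv_mul_rev inv hinv huniq, aux_idem_inv inv hinv huniq hite]
      have hg : ∀ z : S, t * (inv t * (t * z)) = t * z := fun z => by
        rw [← mul_assoc, ← mul_assoc, (hinv t).1]
      rw [hxinv]
      calc u = u * inv u := by
              rw [aux_idem_inv inv hinv huniq hu, hu]
        _ = (s * t) * inv (s * t) := by rw [hst]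
        _ = (s * t) * (inv t * inv s) := by rw [aux_inv_mul_rev inv hinv huniq]
        _ = s * (t * inv t) * ((t * inv t) * inv s) := by
              simp only [mul_assoc, hg]
  · rintro ⟨s, hs, rfl⟩
    show (s * inv s) * (s * inv s) = s * inv s
    rw [← mul_assoc, (hinv s).1]

theorem aux_cond3_of_E
    (h4 : ∀ α : Γ, {u : S | u * u = u} = {x : S | ∃ s ∈ g.comp α, x = s * inv s}) :
    ∀ (α : Γ) (u : S), u * u = u → u ∈ g.comp α * g.comp α⁻¹ := by
  intro α u hu
  have : u ∈ {x : S | ∃ s ∈ g.comp α, x = s * inv s} := by rw [← h4 α]; exact hu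
  obtain ⟨s, hs, rfl⟩ := this
  exact Set.mul_mem_mul hs (aux_inv_mem g inv hinv huniq hs)

end InvGraded

/-- Characterisations of strongly graded semigroups with local units
(Proposition `hgfgftgr`): (1) strongly graded; (2) `S_α S_{α⁻¹} = S_ε`;
(3) `S_α S_{α⁻¹}` contains all the local units (idempotents) of `S`;
and, when `S` is an inverse semigroup (with inverse map `inv`):
(4) `E(S) = {s s⁻¹ | s ∈ S_α}`; (5) `E(S) = {s⁻¹ s | s ∈ S_α}`;
(6) every idempotent is `𝓛`-related to an element of `S_α`;
(7) every idempotent is `𝓡`-related to an element of `S_α`. -/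
theorem strongly_graded_tfae {Γ : Type u} [Group Γ] {S : Type v} [SemigroupWithZero S]
    (g : Grading Γ S) (hlu : HasLocalUnits S) :
    ((g.IsStrong ↔ ∀ α : Γ, g.comp α * g.comp α⁻¹ = g.comp 1) ∧
     (g.IsStrong ↔ ∀ (α : Γ) (u : S), u * u = u → u ∈ g.comp α * g.comp α⁻¹)) ∧
    (∀ inv : S → S,
      (∀ s : S, s * inv s * s = s ∧ inv s * s * inv s = inv s) →
      (∀ s t : S, s * t * s = s → t * s * t = t → t = inv s) →
      ((g.IsStrong ↔
          ∀ α : Γ, {u : S | u * u = u} = {x : S | ∃ s ∈ g.comp α, x = s * inv s}) ∧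
       (g.IsStrong ↔
          ∀ α : Γ, {u : S | u * u = u} = {x : S | ∃ s ∈ g.comp α, x = inv s * s}) ∧
       (g.IsStrong ↔
          ∀ (u : S) (α : Γ), u * u = u → ∃ s ∈ g.comp α, GreenL S u s) ∧
       (g.IsStrong ↔
          ∀ (u : S) (α : Γ), u * u = u → ∃ s ∈ g.comp α, GreenR S u s))) := by
  constructor
  · constructor
    · -- (1) ↔ (2)
      constructor
      · intro h α
        rw [h α α⁻¹, mul_inv_cancel]
      · intro h2
        apply aux_strong_of_cond3 g hlu
        intro α u hu
        rw [h2 α]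
        exact aux_idem_mem_one g hu
    · -- (1) ↔ (3)
      exact ⟨aux_cond3_of_strong g, aux_strong_of_cond3 g hlu⟩
  · intro inv hinv huniq
    refine ⟨?_, ?_, ?_, ?_⟩
    · -- (1) ↔ (4)
      constructor
      · intro h
        exact aux_E_eq g inv hinv huniq (aux_cond3_of_strong g h)
      · intro h4
        exact aux_strong_of_cond3 g hlu (aux_cond3_of_E g inv hinv huniq h4)
    · -- (1) ↔ (5)
      constructor
      · intro h
        intro α
        rw [aux_E_eq g inv hinv huniq (aux_cond3_of_strong g h) α⁻¹]
        ext x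
        constructor
        · rintro ⟨s, hs, rfl⟩
          refine ⟨inv s, ?_, ?_⟩
          · have := aux_inv_mem g inv hinv huniq hs
            rwa [inv_inv] at this
          · rw [aux_inv_invol inv hinv huniq]
        · rintro ⟨s, hs, rfl⟩
          exact ⟨inv s, aux_inv_mem g inv hinv huniq hs,
            by rw [aux_inv_invol inv hinv huniq]⟩
      · intro h5
        apply aux_strong_of_cond3 g hlu
        intro α u hu
        have : u ∈ {x : S | ∃ s ∈ g.comp α⁻¹, x = inv s * s} := by rw [← h5 α⁻¹]; exact hu
        obtain ⟨s, hs, rfl⟩ := this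
        have hi : inv s ∈ g.comp α := by
          have := aux_inv_mem g inv hinv huniq hs
          rwa [inv_inv] at this
        exact Set.mul_mem_mul hi hs
    · -- (1) ↔ (6)
      constructor
      · intro h u α hu
        have h3 := aux_cond3_of_strong g h
        have : u ∈ {x : S | ∃ s ∈ g.comp α⁻¹, x = s * inv s} := by
          rw [← aux_E_eq g inv hinv huniq h3 α⁻¹]; exact hu
        obtain ⟨s, hs, rfl⟩ := this
        have hi : inv s ∈ g.comp α := by
          have := aux_inv_mem g inv hinv huniq hs
          rwa [inv_inv] at this
        refine ⟨inv s, hi, ?_, ?_⟩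
        · exact Or.inr ⟨s, rfl⟩
        · refine Or.inr ⟨inv s, ?_⟩
          rw [← mul_assoc, (hinv s).2]
      · intro h6
        apply aux_strong_of_cond3 g hlu
        intro α u hu
        obtain ⟨s, hs, hL⟩ := h6 u α⁻¹ hu
        have := aux_greenL_idem inv hinv huniq hu hL
        rw [this]
        have hi : inv s ∈ g.comp α := by
          have := aux_inv_mem g inv hinv huniq hs
          rwa [inv_inv] at this
        exact Set.mul_mem_mul hi hs
    · -- (1) ↔ (7)
      constructor
      · intro h u α hu
        have h3 := aux_cond3_of_strong g h
        have : u ∈ {x : S | ∃ s ∈ g.comp α, x = s * inv s} := by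
          rw [← aux_E_eq g inv hinv huniq h3 α]; exact hu
        obtain ⟨s, hs, rfl⟩ := this
        refine ⟨s, hs, ?_, ?_⟩
        · exact Or.inr ⟨inv s, rfl⟩
        · exact Or.inr ⟨s, ((hinv s).1).symm⟩
      · intro h7
        apply aux_strong_of_cond3 g hlu
        intro α u hu
        obtain ⟨s, hs, hR⟩ := h7 u α hu
        have := aux_greenR_idem inv hinv huniq hu hR
        rw [this]
        exact Set.mul_mem_mul hs (aux_inv_mem g inv hinv huniq hs)
end

section
/- Let S be a strongly Γ-graded semigroup with local units. Then: (1) S is a regular semigroup if and only if S_ε is a regular semigroup; (2) S is an inverse semigroup if and only if S_ε is an inverse semigroup. -/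
open Pointwise

section Aux
variable {Γ : Type*} [Group Γ] {S : Type*} [SemigroupWithZero S]

lemma mul_mem_comp1 (g : Grading Γ S) {a b : S} (ha : a ∈ g.comp 1) (hb : b ∈ g.comp 1) :
    a * b ∈ g.comp 1 := by
  by_cases h : a * b = 0
  · exact Or.inl h
  · have ha0 : a ≠ 0 := fun h' => h (by simp [h'])
    have hb0 : b ≠ 0 := fun h' => h (by simp [h'])
    right
    rw [g.deg_mul a b h, ha.resolve_left ha0, hb.resolve_left hb0, one_mul]

lemma idem_mem_comp1 (g : Grading Γ S) {e : S} (he : e * e = e) : e ∈ g.comp 1 := by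
  by_cases h : e = 0
  · exact Or.inl h
  · right
    have h2 := g.deg_mul e e (by rw [he]; exact h)
    rw [he] at h2
    exact mul_eq_left.mp h2.symm

end Aux

section Aux2
variable {Γ : Type*} [Group Γ] {S : Type*} [SemigroupWithZero S]

lemma reg_of_reg1 (g : Grading Γ S) (hstr : g.IsStrong) (hlu : HasLocalUnits S)
    (h1 : ∀ s ∈ g.comp 1, ∃ t ∈ g.comp 1, s * t * s = s) :
    ∀ s : S, ∃ t : S, s * t * s = s := by
  intro s
  by_cases hs : s = 0
  · exact ⟨0, by simp [hs]⟩
  obtain ⟨u, v, hu, hv, hus, hsv⟩ := hlu s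
  have hv0 : v ≠ 0 := fun h => hs (by rw [← hsv, h, mul_zero])
  have hvdeg : g.deg v = 1 := by
    have h2 := g.deg_mul v v (by rw [hv]; exact hv0)
    rw [hv] at h2
    exact mul_eq_left.mp h2.symm
  have hvmem : v ∈ g.comp ((g.deg s)⁻¹ * g.deg s) := by
    rw [inv_mul_cancel]; exact Or.inr hvdeg
  rw [← hstr (g.deg s)⁻¹ (g.deg s)] at hvmem
  obtain ⟨x, hx, y, hy, hxy'⟩ := hvmem
  have hxy : x * y = v := hxy'
  have hsx : s * x ∈ g.comp 1 := by
    by_cases h : s * x = 0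
    · exact Or.inl h
    · have hx0 : x ≠ 0 := fun h' => h (by simp [h'])
      right
      rw [g.deg_mul s x h, hx.resolve_left hx0, mul_inv_cancel]
  obtain ⟨w, hw, hkey⟩ := h1 (s * x) hsx
  refine ⟨x * w, ?_⟩
  have h2 := congrArg (· * y) hkey
  simp only [mul_assoc] at h2 ⊢
  rw [hxy, hsv] at h2
  exact h2

end Aux2

section Aux3
variable {Γ : Type*} [Group Γ] {S : Type*} [SemigroupWithZero S]

/-- If `S_ε` has unique inverses, the product of two idempotents is idempotent. -/
lemma idem_mul_idem (g : Grading Γ S)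
    (h1 : ∀ s ∈ g.comp 1, ∃! t : S, t ∈ g.comp 1 ∧ s * t * s = s ∧ t * s * t = t)
    {a b : S} (ha : a * a = a) (hb : b * b = b) : (a * b) * (a * b) = a * b := by
  have hamem := idem_mem_comp1 g ha
  have hbmem := idem_mem_comp1 g hb
  have habmem := mul_mem_comp1 g hamem hbmem
  obtain ⟨x, ⟨hx1, hx2, hx3⟩, -⟩ := h1 (a * b) habmem
  have haz : ∀ z : S, a * (a * z) = a * z := fun z => by rw [← mul_assoc, ha]
  have hbz : ∀ z : S, b * (b * z) = b * z := fun z => by rw [← mul_assoc, hb]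
  simp only [mul_assoc] at hx2 hx3
  -- hx2 : a * (b * (x * (a * b))) = a * b
  -- hx3 : x * (a * (b * x)) = x
  have hxz : ∀ z : S, x * (a * (b * (x * z))) = x * z := fun z => by
    have h := congrArg (· * z) hx3
    simpa only [mul_assoc] using h
  set gg := b * x * a with hgg
  have hggmem : gg ∈ g.comp 1 := mul_mem_comp1 g (mul_mem_comp1 g hbmem hx1) hamem
  have hggidem : gg * gg = gg := by
    simp only [hgg, mul_assoc, hxz]
  have hrel1 : gg * (a * b) * gg = gg := by
    simp only [hgg, mul_assoc, haz, hbz, hxz]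
  have hrel2 : (a * b) * gg * (a * b) = a * b := by
    simp only [hgg, mul_assoc, haz, hbz, hx2]
  obtain ⟨y, -, hyu⟩ := h1 gg hggmem
  have e1 : gg = y := hyu gg ⟨hggmem, by rw [hggidem, hggidem], by rw [hggidem, hggidem]⟩
  have e2 : a * b = y := hyu (a * b) ⟨habmem, hrel1, hrel2⟩
  rw [e2.trans e1.symm, hggidem]

/-- If `S_ε` has unique inverses, idempotents of `S` commute. -/
lemma idem_comm (g : Grading Γ S)
    (h1 : ∀ s ∈ g.comp 1, ∃! t : S, t ∈ g.comp 1 ∧ s * t * s = s ∧ t * s * t = t)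
    {e f : S} (he : e * e = e) (hf : f * f = f) : e * f = f * e := by
  have hef : (e * f) * (e * f) = e * f := idem_mul_idem g h1 he hf
  have hfe : (f * e) * (f * e) = f * e := idem_mul_idem g h1 hf he
  have hez : ∀ z : S, e * (e * z) = e * z := fun z => by rw [← mul_assoc, he]
  have hfz : ∀ z : S, f * (f * z) = f * z := fun z => by rw [← mul_assoc, hf]
  have hefmem := mul_mem_comp1 g (idem_mem_comp1 g he) (idem_mem_comp1 g hf)
  have hfemem := mul_mem_comp1 g (idem_mem_comp1 g hf) (idem_mem_comp1 g he)
  have hef' : e * (f * (e * f)) = e * f := by simpa [mul_assoc] using hef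
  have hfe' : f * (e * (f * e)) = f * e := by simpa [mul_assoc] using hfe
  have hr1 : (e * f) * (f * e) * (e * f) = e * f := by
    simp only [mul_assoc, hez, hfz, hef']
  have hr2 : (f * e) * (e * f) * (f * e) = f * e := by
    simp only [mul_assoc, hez, hfz, hfe']
  obtain ⟨y, -, hyu⟩ := h1 (e * f) hefmem
  have e1 : e * f = y := hyu (e * f) ⟨hefmem, by rw [hef, hef], by rw [hef, hef]⟩
  have e2 : f * e = y := hyu (f * e) ⟨hfemem, hr1, hr2⟩
  rw [e1, e2]

end Aux3

section Aux4
variable {Γ : Type*} [Group Γ] {S : Type*} [SemigroupWithZero S]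

lemma gr_inv_unique (g : Grading Γ S)
    (h1 : ∀ s ∈ g.comp 1, ∃! t : S, t ∈ g.comp 1 ∧ s * t * s = s ∧ t * s * t = t)
    {s t t' : S} (h : s * t * s = s) (h' : t * s * t = t)
    (k : s * t' * s = s) (k' : t' * s * t' = t') : t = t' := by
  have ist : (s * t) * (s * t) = s * t := by
    have := congrArg (· * t) h; simpa [mul_assoc] using this
  have ist' : (s * t') * (s * t') = s * t' := by
    have := congrArg (· * t') k; simpa [mul_assoc] using this
  have its : (t * s) * (t * s) = t * s := by
    have := congrArg (t * ·) h; simpa [mul_assoc] using this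
  have it's : (t' * s) * (t' * s) = t' * s := by
    have := congrArg (t' * ·) k; simpa [mul_assoc] using this
  have c1 : (s * t') * (s * t) = (s * t) * (s * t') := idem_comm g h1 ist' ist
  have c2 : (t * s) * (t' * s) = (t' * s) * (t * s) := idem_comm g h1 its it's
  have hA : t = t * s * t' := by
    calc t = t * s * t := h'.symm
      _ = t * (s * t' * s) * t := by rw [k]
      _ = t * ((s * t') * (s * t)) := by simp [mul_assoc]
      _ = t * ((s * t) * (s * t')) := by rw [c1]
      _ = (t * s * t) * (s * t') := by simp [mul_assoc]
      _ = t * (s * t') := by rw [h']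
      _ = t * s * t' := by rw [mul_assoc]
  have hB : t' = t * s * t' := by
    calc t' = t' * s * t' := k'.symm
      _ = t' * (s * t * s) * t' := by rw [h]
      _ = ((t' * s) * (t * s)) * t' := by simp [mul_assoc]
      _ = ((t * s) * (t' * s)) * t' := by rw [← c2]
      _ = (t * s) * (t' * s * t') := by simp [mul_assoc]
      _ = (t * s) * t' := by rw [k']
  exact hA.trans hB.symm

end Aux4

section Aux5
variable {Γ : Type*} [Group Γ] {S : Type*} [SemigroupWithZero S]

lemma inv_mem_comp1 (g : Grading Γ S) {s t : S} (hs : s ∈ g.comp 1)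
    (h : s * t * s = s) (h' : t * s * t = t) : t ∈ g.comp 1 := by
  by_cases ht : t = 0
  · exact Or.inl ht
  right
  have hs0 : s ≠ 0 := by
    intro h0
    exact ht (by rw [← h', h0, mul_zero, zero_mul])
  have hsdeg : g.deg s = 1 := hs.resolve_left hs0
  have hst0 : s * t ≠ 0 := by
    intro h0
    exact hs0 (by rw [← h, h0, zero_mul])
  have hd : g.deg s = g.deg s * g.deg t * g.deg s := by
    conv_lhs => rw [← h]
    rw [g.deg_mul _ s (by rw [h]; exact hs0), g.deg_mul s t hst0]
  rw [hsdeg, one_mul, mul_one] at hd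
  exact hd.symm

end Aux5

/-- For a strongly `Γ`-graded semigroup `S` with local units:
(1) `S` is regular iff `S_ε` is regular;
(2) `S` is an inverse semigroup iff `S_ε` is an inverse semigroup
(where inner inverses of elements of `S_ε` are required to lie in, and be unique in,
`S_ε = comp 1`). -/
theorem strongly_graded_regular_and_inverse {Γ : Type u} [Group Γ] {S : Type v}
    [SemigroupWithZero S] (g : Grading Γ S) (hstr : g.IsStrong)
    (hlu : HasLocalUnits S) :
    ((∀ s : S, ∃ t : S, s * t * s = s) ↔
      (∀ s ∈ g.comp 1, ∃ t ∈ g.comp 1, s * t * s = s)) ∧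
    ((∀ s : S, ∃! t : S, s * t * s = s ∧ t * s * t = t) ↔
      (∀ s ∈ g.comp 1, ∃! t : S, t ∈ g.comp 1 ∧ s * t * s = s ∧ t * s * t = t)) := by
  constructor
  · constructor
    · intro hreg s hs
      obtain ⟨t, ht⟩ := hreg s
      have h1 : s * (t * s * t) * s = s := by
        calc s * (t * s * t) * s = s * t * (s * t * s) := by simp [mul_assoc]
          _ = s * t * s := by conv_lhs => rw [ht]
          _ = s := ht
      have h2 : (t * s * t) * s * (t * s * t) = t * s * t := by
        calc (t * s * t) * s * (t * s * t) = t * (s * t * s) * (t * s * t) := by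
              simp [mul_assoc]
          _ = t * s * (t * s * t) := by rw [ht]
          _ = t * (s * t * s) * t := by simp [mul_assoc]
          _ = t * s * t := by rw [ht]
      exact ⟨t * s * t, inv_mem_comp1 g hs h1 h2, h1⟩
    · exact fun h1 => reg_of_reg1 g hstr hlu h1
  · constructor
    · intro hinv s hs
      obtain ⟨t, ⟨ht1, ht2⟩, htu⟩ := hinv s
      exact ⟨t, ⟨inv_mem_comp1 g hs ht1 ht2, ht1, ht2⟩,
        fun y hy => htu y ⟨hy.2.1, hy.2.2⟩⟩
    · intro h1 s
      have hreg1 : ∀ s ∈ g.comp 1, ∃ t ∈ g.comp 1, s * t * s = s := by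
        intro s hs
        obtain ⟨t, ⟨ht0, ht1, -⟩, -⟩ := h1 s hs
        exact ⟨t, ht0, ht1⟩
      obtain ⟨t, ht⟩ := reg_of_reg1 g hstr hlu hreg1 s
      have e1 : s * (t * s * t) * s = s := by
        calc s * (t * s * t) * s = s * t * (s * t * s) := by simp [mul_assoc]
          _ = s * t * s := by conv_lhs => rw [ht]
          _ = s := ht
      have e2 : (t * s * t) * s * (t * s * t) = t * s * t := by
        calc (t * s * t) * s * (t * s * t) = t * (s * t * s) * (t * s * t) := by
              simp [mul_assoc]
          _ = t * s * (t * s * t) := by rw [ht]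
          _ = t * (s * t * s) * t := by simp [mul_assoc]
          _ = t * s * t := by rw [ht]
      exact ⟨t * s * t, ⟨e1, e2⟩,
        fun y hy => gr_inv_unique g h1 hy.1 hy.2 e1 e2⟩
end

section
/- Let S be a Γ-graded inverse semigroup. Then the following are equivalent: (1) S is locally strongly graded; (2) for all α ∈ Γ and u ∈ E(S)∖{0} there exists v ∈ E(S)_α∖{0} with v ≤ u; (3) for all α, β ∈ Γ and s ∈ S_{αβ}∖{0} there exists u ∈ E(S)∖{0} such that u ≤ s⁻¹s and su ∈ S_α S_β; (4) for all α, β ∈ Γ and s ∈ S_{αβ}∖{0} there exists u ∈ E(S)∖{0} such that u ≤ s s⁻¹ and us ∈ S_α S_β. -/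
open Pointwise

/-- The natural partial order on an inverse semigroup: `s ≤ t` iff `s = tu` for some
idempotent `u`. -/
def NatLe (S : Type*) [SemigroupWithZero S] (s t : S) : Prop :=
  ∃ u : S, u * u = u ∧ s = t * u

section Aux
variable {S : Type*} [SemigroupWithZero S] (inv : S → S)

private lemma L1 (hinv : ∀ s : S, s * inv s * s = s ∧ inv s * s * inv s = inv s)
    (a y : S) : a * (inv a * (a * y)) = a * y := by
  rw [← mul_assoc, ← mul_assoc, (hinv a).1]

private lemma L2 (hinv : ∀ s : S, s * inv s * s = s ∧ inv s * s * inv s = inv s)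
    (a y : S) : inv a * (a * (inv a * y)) = inv a * y := by
  rw [← mul_assoc, ← mul_assoc, (hinv a).2]

private lemma L3 (hinv : ∀ s : S, s * inv s * s = s ∧ inv s * s * inv s = inv s)
    (a : S) : a * (inv a * a) = a := by rw [← mul_assoc]; exact (hinv a).1

private lemma L4 (hinv : ∀ s : S, s * inv s * s = s ∧ inv s * s * inv s = inv s)
    (a : S) : inv a * (a * inv a) = inv a := by rw [← mul_assoc]; exact (hinv a).2

private lemma idemMulInv (hinv : ∀ s : S, s * inv s * s = s ∧ inv s * s * inv s = inv s)
    (a : S) : (a * inv a) * (a * inv a) = a * inv a := by rw [mul_assoc, L4 inv hinv]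

private lemma idemInvMul (hinv : ∀ s : S, s * inv s * s = s ∧ inv s * s * inv s = inv s)
    (a : S) : (inv a * a) * (inv a * a) = inv a * a := by rw [mul_assoc, L3 inv hinv]

private lemma invIdem (huniq : ∀ s t : S, s * t * s = s → t * s * t = t → t = inv s)
    {e : S} (he : e * e = e) : inv e = e :=
  (huniq e e (by rw [he, he]) (by rw [he, he])).symm

private lemma idemMul (hinv : ∀ s : S, s * inv s * s = s ∧ inv s * s * inv s = inv s)
    (huniq : ∀ s t : S, s * t * s = s → t * s * t = t → t = inv s)
    {e f : S} (he : e * e = e) (hf : f * f = f) : (e * f) * (e * f) = e * f := by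
  have heA : ∀ y : S, e * (e * y) = e * y := fun y => by rw [← mul_assoc, he]
  have hfA : ∀ y : S, f * (f * y) = f * y := fun y => by rw [← mul_assoc, hf]
  set x := inv (e * f) with hx
  have hinv1 : (e * f) * x * (e * f) = e * f := (hinv (e * f)).1
  have hinv2 : x * (e * f) * x = x := (hinv (e * f)).2
  have hinv2A : ∀ y : S, x * (e * (f * (x * y))) = x * y := fun y => by
    have h := congrArg (· * y) hinv2
    simpa only [mul_assoc] using h
  have h1 : (e * f) * (f * x * e) * (e * f) = e * f := by
    have h := hinv1
    simp only [mul_assoc] at h ⊢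
    simp only [heA, hfA]
    exact h
  have h2 : (f * x * e) * (e * f) * (f * x * e) = f * x * e := by
    simp only [mul_assoc, heA, hfA, hinv2A]
  have hx1 : f * x * e = x := huniq (e * f) (f * x * e) h1 h2
  have hxx : x * x = x := by
    rw [← hx1]; simp only [mul_assoc, hinv2A]
  have hxinv : x = inv x := huniq x x (by rw [hxx, hxx]) (by rw [hxx, hxx])
  have hefx : e * f = x := by
    have h := huniq x (e * f) hinv2 hinv1
    rw [h, ← hxinv]
  rw [hefx]; exact hxx

private lemma idemComm (hinv : ∀ s : S, s * inv s * s = s ∧ inv s * s * inv s = inv s)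
    (huniq : ∀ s t : S, s * t * s = s → t * s * t = t → t = inv s)
    {e f : S} (he : e * e = e) (hf : f * f = f) : e * f = f * e := by
  have heA : ∀ y : S, e * (e * y) = e * y := fun y => by rw [← mul_assoc, he]
  have hfA : ∀ y : S, f * (f * y) = f * y := fun y => by rw [← mul_assoc, hf]
  have hef := idemMul inv hinv huniq he hf
  have hfe := idemMul inv hinv huniq hf he
  have h1 : (e * f) * (f * e) * (e * f) = e * f := by
    simp only [mul_assoc, hfA, heA]
    rw [← mul_assoc, hef]
  have h2 : (f * e) * (e * f) * (f * e) = f * e := by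
    simp only [mul_assoc, heA, hfA]
    rw [← mul_assoc, hfe]
  have h := huniq (e * f) (f * e) h1 h2
  have hinvef : inv (e * f) = e * f := invIdem inv huniq hef
  rw [h, hinvef]

private lemma mulInvRev (hinv : ∀ s : S, s * inv s * s = s ∧ inv s * s * inv s = inv s)
    (huniq : ∀ s t : S, s * t * s = s → t * s * t = t → t = inv s)
    (s t : S) : inv (s * t) = inv t * inv s := by
  have hcomm : (t * inv t) * (inv s * s) = (inv s * s) * (t * inv t) :=
    idemComm inv hinv huniq (idemMulInv inv hinv t) (idemInvMul inv hinv s)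
  refine (huniq (s * t) (inv t * inv s) ?_ ?_).symm
  · calc (s * t) * (inv t * inv s) * (s * t)
        = s * ((t * inv t) * (inv s * s) * t) := by simp only [mul_assoc]
      _ = s * ((inv s * s) * (t * inv t) * t) := by rw [hcomm]
      _ = s * t := by simp only [mul_assoc, L1 inv hinv, L3 inv hinv]
  · calc (inv t * inv s) * (s * t) * (inv t * inv s)
        = inv t * ((inv s * s) * (t * inv t) * inv s) := by simp only [mul_assoc]
      _ = inv t * ((t * inv t) * (inv s * s) * inv s) := by rw [← hcomm]
      _ = inv t * inv s := by simp only [mul_assoc, L2 inv hinv, L4 inv hinv]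

end Aux

/-- Characterisations of locally strongly graded inverse semigroups
(Proposition `sussa`).  For a `Γ`-graded inverse semigroup `S` (with inverse map `inv`)
the following are equivalent:
(1) `S` is locally strongly graded: for all `α, β` and nonzero `s ∈ S_{αβ}` there is a
    nonzero `t ∈ S_α S_β` with `t ≤ s`;
(2) for all `α` and all nonzero idempotents `u`, there is a nonzero
    `v ∈ E(S)_α = {s s⁻¹ | s ∈ S_α}` with `v ≤ u`;
(3) for all `α, β` and nonzero `s ∈ S_{αβ}`, there is a nonzero idempotent `u` with
    `u ≤ s⁻¹ s` and `s u ∈ S_α S_β`;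
(4) for all `α, β` and nonzero `s ∈ S_{αβ}`, there is a nonzero idempotent `u` with
    `u ≤ s s⁻¹` and `u s ∈ S_α S_β`. -/
theorem locally_strongly_graded_tfae {Γ : Type u} [Group Γ] {S : Type v}
    [SemigroupWithZero S] (g : Grading Γ S) (inv : S → S)
    (hinv : ∀ s : S, s * inv s * s = s ∧ inv s * s * inv s = inv s)
    (huniq : ∀ s t : S, s * t * s = s → t * s * t = t → t = inv s) :
    ((∀ α β : Γ, ∀ s ∈ g.comp (α * β), s ≠ 0 →
        ∃ t ∈ g.comp α * g.comp β, t ≠ 0 ∧ NatLe S t s) ↔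
      (∀ (α : Γ) (u : S), u * u = u → u ≠ 0 →
        ∃ v : S, v ≠ 0 ∧ (∃ s ∈ g.comp α, v = s * inv s) ∧ NatLe S v u)) ∧
    ((∀ α β : Γ, ∀ s ∈ g.comp (α * β), s ≠ 0 →
        ∃ t ∈ g.comp α * g.comp β, t ≠ 0 ∧ NatLe S t s) ↔
      (∀ α β : Γ, ∀ s ∈ g.comp (α * β), s ≠ 0 →
        ∃ u : S, u * u = u ∧ u ≠ 0 ∧ NatLe S u (inv s * s) ∧
          s * u ∈ g.comp α * g.comp β)) ∧
    ((∀ α β : Γ, ∀ s ∈ g.comp (α * β), s ≠ 0 →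
        ∃ t ∈ g.comp α * g.comp β, t ≠ 0 ∧ NatLe S t s) ↔
      (∀ α β : Γ, ∀ s ∈ g.comp (α * β), s ≠ 0 →
        ∃ u : S, u * u = u ∧ u ≠ 0 ∧ NatLe S u (s * inv s) ∧
          u * s ∈ g.comp α * g.comp β)) := by
  have hL1 := L1 inv hinv
  have hL2 := L2 inv hinv
  have hIMI := idemMulInv inv hinv
  have hIIM := idemInvMul inv hinv
  have hMI := mulInvRev inv hinv huniq
  have hcommI : ∀ e f : S, e * e = e → f * f = f → e * f = f * e :=
    fun e f he hf => idemComm inv hinv huniq he hf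
  have hII : ∀ {e : S}, e * e = e → inv e = e := fun he => invIdem inv huniq he
  have hsi_ne : ∀ s : S, s ≠ 0 → s * inv s ≠ 0 := fun s hs h0 =>
    hs (by rw [← (hinv s).1, h0, zero_mul])
  have hdeg1 : ∀ e : S, e * e = e → e ≠ 0 → g.deg e = 1 := by
    intro e he hne
    have h := g.deg_mul e e (by rw [he]; exact hne)
    rw [he] at h
    exact left_eq_mul.mp h
  have hdeginv : ∀ s : S, s ≠ 0 → g.deg (inv s) = (g.deg s)⁻¹ := by
    intro s hs
    have h1 := hsi_ne s hs
    have h3 := hdeg1 _ (hIMI s) h1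
    rw [g.deg_mul s (inv s) h1] at h3
    exact (inv_eq_of_mul_eq_one_right h3).symm
  have hP : ∀ s w : S, w * w = w →
      (inv s * (w * s)) * (inv s * (w * s)) = inv s * (w * s) ∧
      ((s * inv s) * w) * s = s * (inv s * (w * s)) := by
    intro s w hw
    have hwA : ∀ y : S, w * (w * y) = w * y := fun y => by rw [← mul_assoc, hw]
    have hc : w * (s * inv s) = (s * inv s) * w := hcommI w _ hw (hIMI s)
    constructor
    · calc (inv s * (w * s)) * (inv s * (w * s))
          = inv s * ((w * (s * inv s)) * (w * s)) := by simp only [mul_assoc]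
        _ = inv s * (((s * inv s) * w) * (w * s)) := by rw [hc]
        _ = inv s * (w * s) := by simp only [mul_assoc, hwA, hL2]
    · simp only [mul_assoc]
  refine ⟨⟨?_, ?_⟩, ⟨?_, ?_⟩, ⟨?_, ?_⟩⟩
  · -- (1) → (2)
    intro h α u hu hune
    have hdegu : g.deg u = 1 := hdeg1 u hu hune
    have hmemu : u ∈ g.comp (α * α⁻¹) :=
      Or.inr (by rw [mul_inv_cancel]; exact hdegu)
    obtain ⟨t, htm, htne, w, hw, htw⟩ := h α α⁻¹ u hmemu hune
    obtain ⟨a, ha, b, hb, hab⟩ := Set.mem_mul.mp htm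
    have huA : ∀ y : S, u * (u * y) = u * y := fun y => by rw [← mul_assoc, hu]
    have hwA : ∀ y : S, w * (w * y) = w * y := fun y => by rw [← mul_assoc, hw]
    have hvne : t * inv t ≠ 0 := hsi_ne t htne
    have hss' : (a * (b * inv b)) * inv (a * (b * inv b)) = t * inv t := by
      rw [hMI a (b * inv b), hII (hIMI b), ← hab, hMI a b]
      simp only [mul_assoc, hL1]
    have hs'mem : a * (b * inv b) ∈ g.comp α := by
      by_cases h0 : a * (b * inv b) = 0
      · exact Or.inl h0
      · right
        have hbb : b * inv b ≠ 0 := fun hb0 => h0 (by rw [hb0, mul_zero])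
        have hane : a ≠ 0 := fun ha0 => h0 (by rw [ha0, zero_mul])
        have ha' : a = 0 ∨ g.deg a = α := ha
        rw [g.deg_mul a _ h0, hdeg1 _ (hIMI b) hbb, mul_one]
        exact ha'.resolve_left hane
    have hvu : t * inv t = u * w := by
      rw [htw, hMI u w, hII hw, hII hu]
      have hcwu : w * u = u * w := hcommI w u hw hu
      calc (u * w) * (w * u) = u * (w * u) := by simp only [mul_assoc, hwA]
        _ = u * (u * w) := by rw [hcwu]
        _ = u * w := huA w
    exact ⟨t * inv t, hvne, ⟨a * (b * inv b), hs'mem, hss'.symm⟩, ⟨w, hw, hvu⟩⟩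
  · -- (2) → (1)
    intro h α β s hs hsne
    obtain ⟨v, hvne, ⟨r, hr, hvr⟩, ⟨w, hw, hvw⟩⟩ := h α (s * inv s) (hIMI s) (hsi_ne s hsne)
    have hrne : r ≠ 0 := fun h0 => hvne (by rw [hvr, h0, zero_mul])
    have hr' : r = 0 ∨ g.deg r = α := hr
    have hs' : s = 0 ∨ g.deg s = α * β := hs
    have hdegr : g.deg r = α := hr'.resolve_left hrne
    have hdegs : g.deg s = α * β := hs'.resolve_left hsne
    have hmem : v * s ∈ g.comp α * g.comp β := by
      have hmemis : inv r * s ∈ g.comp β := by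
        by_cases h0 : inv r * s = 0
        · exact Or.inl h0
        · right
          rw [g.deg_mul _ _ h0, hdeginv r hrne, hdegr, hdegs, inv_mul_cancel_left]
      have heq : r * (inv r * s) = v * s := by rw [hvr, mul_assoc]
      exact heq ▸ Set.mul_mem_mul hr hmemis
    have hvfix : v * (s * inv s) = v := by
      rw [hvw]
      have hc : w * (s * inv s) = (s * inv s) * w := hcommI w _ hw (hIMI s)
      calc ((s * inv s) * w) * (s * inv s)
          = (s * inv s) * (w * (s * inv s)) := by rw [mul_assoc]
        _ = (s * inv s) * ((s * inv s) * w) := by rw [hc]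
        _ = (s * inv s) * w := by simp only [mul_assoc, hL1]
    have htne : v * s ≠ 0 := by
      intro h0
      apply hvne
      rw [← hvfix, ← mul_assoc, h0, zero_mul]
    refine ⟨v * s, hmem, htne, inv s * (w * s), (hP s w hw).1, ?_⟩
    rw [hvw]; exact (hP s w hw).2
  · -- (1) → (3)
    intro h α β s hs hsne
    obtain ⟨t, htm, htne, w, hw, htw⟩ := h α β s hs hsne
    have hwA : ∀ y : S, w * (w * y) = w * y := fun y => by rw [← mul_assoc, hw]
    have hc : w * (inv s * s) = (inv s * s) * w := hcommI w _ hw (hIIM s)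
    have hst : s * (inv s * t) = t := by rw [htw]; exact hL1 s w
    refine ⟨inv s * t, ?_, ?_, ⟨w, hw, ?_⟩, ?_⟩
    · rw [htw]
      calc (inv s * (s * w)) * (inv s * (s * w))
          = inv s * (s * ((w * (inv s * s)) * w)) := by simp only [mul_assoc]
        _ = inv s * (s * (((inv s * s) * w) * w)) := by rw [hc]
        _ = inv s * (s * w) := by simp only [mul_assoc, hw, hwA, hL2]
    · intro h0
      apply htne
      rw [← hst, h0, mul_zero]
    · rw [htw, mul_assoc]
    · rw [hst]; exact htm
  · -- (3) → (1)
    intro h α β s hs hsne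
    obtain ⟨u, hu, hune, ⟨w, hw, huw⟩, hmem⟩ := h α β s hs hsne
    refine ⟨s * u, hmem, ?_, ⟨u, hu, rfl⟩⟩
    intro h0
    apply hune
    have hfix : u = inv s * (s * u) := by
      rw [huw]; simp only [mul_assoc, hL2]
    rw [hfix, h0, mul_zero]
  · -- (1) → (4)
    intro h α β s hs hsne
    obtain ⟨t, htm, htne, w, hw, htw⟩ := h α β s hs hsne
    have hwA : ∀ y : S, w * (w * y) = w * y := fun y => by rw [← mul_assoc, hw]
    have hc : w * (inv s * s) = (inv s * s) * w := hcommI w _ hw (hIIM s)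
    have hus : ((s * w) * inv s) * s = t := by
      rw [htw]
      calc ((s * w) * inv s) * s = s * (w * (inv s * s)) := by simp only [mul_assoc]
        _ = s * ((inv s * s) * w) := by rw [hc]
        _ = s * w := by simp only [mul_assoc, hL1]
    have huidem : ((s * w) * inv s) * ((s * w) * inv s) = (s * w) * inv s := by
      calc ((s * w) * inv s) * ((s * w) * inv s)
          = s * ((w * (inv s * s)) * (w * inv s)) := by simp only [mul_assoc]
        _ = s * (((inv s * s) * w) * (w * inv s)) := by rw [hc]
        _ = (s * w) * inv s := by simp only [mul_assoc, hwA, hL1]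
    have hle : (s * w) * inv s = (s * inv s) * ((s * w) * inv s) := by
      simp only [mul_assoc, hL1]
    refine ⟨(s * w) * inv s, huidem, ?_, ⟨(s * w) * inv s, huidem, hle⟩, ?_⟩
    · intro h0
      apply htne
      rw [← hus, h0, zero_mul]
    · rw [hus]; exact htm
  · -- (4) → (1)
    intro h α β s hs hsne
    obtain ⟨u, hu, hune, ⟨w, hw, huw⟩, hmem⟩ := h α β s hs hsne
    have ht : u * s = s * (inv s * (w * s)) := by rw [huw]; exact (hP s w hw).2
    refine ⟨u * s, hmem, ?_, ⟨inv s * (w * s), (hP s w hw).1, ht⟩⟩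
    intro h0
    apply hune
    have hc : w * (s * inv s) = (s * inv s) * w := hcommI w _ hw (hIMI s)
    have hfix : ((s * inv s) * w * s) * inv s = (s * inv s) * w := by
      calc ((s * inv s) * w * s) * inv s
          = s * (inv s * (w * (s * inv s))) := by simp only [mul_assoc]
        _ = s * (inv s * ((s * inv s) * w)) := by rw [hc]
        _ = (s * inv s) * w := by simp only [mul_assoc, hL1]
    have hu2 : u = (u * s) * inv s := by rw [huw]; exact hfix.symm
    rw [hu2, h0, zero_mul]
end

section
/- Let S be a Γ-graded semigroup with local units. Then the following are equivalent: (1) S is strongly graded; (2) S_α X_β = X_{αβ} for all α, β ∈ Γ and every unital Γ-graded left S-set X; (3) S X_α = X for all α ∈ Γ and every unital Γ-graded left S-set X. -/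
open Pointwise

/-- A `Γ`-graded pointed left `S`-set: a pointed set `X` with an `S`-action and a degree
map (total here, with irrelevant value at `0`) satisfying `deg(sx) = deg(s)deg(x)`
whenever `sx ≠ 0`. -/
structure GradedAct {Γ : Type u} [Group Γ] {S : Type w} [SemigroupWithZero S]
    (g : Grading Γ S) (X : Type v) [Zero X] where
  act : S → X → X
  act_mul : ∀ (s t : S) (x : X), act s (act t x) = act (s * t) x
  act_zero : ∀ x : X, act 0 x = 0
  degX : X → Γ
  deg_act : ∀ (s : S) (x : X), act s x ≠ 0 → degX (act s x) = g.deg s * degX x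

/-- The component `X_α` of a `Γ`-graded left `S`-set. -/
def GradedAct.comp {Γ : Type u} [Group Γ] {S : Type w} [SemigroupWithZero S]
    {g : Grading Γ S} {X : Type v} [Zero X] (A : GradedAct g X) (α : Γ) : Set X :=
  {x | x = 0 ∨ A.degX x = α}

section Aux
variable {Γ : Type u} [Group Γ] {S : Type w} [SemigroupWithZero S]
    {g : Grading Γ S} {X : Type v} [Zero X] (A : GradedAct g X)

lemma act_zero_right (s : S) : A.act s (0 : X) = 0 := by
  have h := A.act_mul s 0 (0 : X)
  rwa [mul_zero, A.act_zero] at h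

/-- key: strong grading lets us factor any nonzero x through any degree β. -/
lemma key (hg : g.IsStrong) (hlu : HasLocalUnits S)
    (hu : ∀ x : X, ∃ (s : S) (y : X), A.act s y = x)
    (x : X) (hx : x ≠ 0) (β : Γ) :
    ∃ a y, a ∈ g.comp (A.degX x * β⁻¹) ∧ y ∈ A.comp β ∧ A.act a y = x := by
  obtain ⟨s, z, hs⟩ := hu x
  have hs0 : s ≠ 0 := by rintro rfl; exact hx (hs ▸ A.act_zero z)
  obtain ⟨u, v, huu, -, hus, -⟩ := hlu s
  have hux : A.act u x = x := by
    rw [← hs, A.act_mul, hus]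
  have hu0 : u ≠ 0 := by rintro rfl; exact hs0 (by rw [← hus, zero_mul])
  have huε : g.deg u = 1 := by
    have h1 := g.deg_mul u u (by rw [huu]; exact hu0)
    rw [huu] at h1
    have h2 : g.deg u * 1 = g.deg u * g.deg u := by rw [mul_one]; exact h1
    exact (mul_left_cancel h2).symm
  set δ := A.degX x * β⁻¹ with hδ
  have humem : u ∈ g.comp δ * g.comp δ⁻¹ := by
    rw [hg δ δ⁻¹, mul_inv_cancel]
    exact Or.inr huε
  obtain ⟨a, ha, b, hb, hab0⟩ := humem
  have hab : a * b = u := hab0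
  refine ⟨a, A.act b x, ha, ?_, ?_⟩
  · have hax : A.act a (A.act b x) = x := by rw [A.act_mul, hab, hux]
    have hbx0 : A.act b x ≠ 0 := by
      intro h0; exact hx (by rw [← hax, h0, act_zero_right])
    have hb0 : b ≠ 0 := by rintro rfl; exact hbx0 (A.act_zero x)
    have hbdeg : g.deg b = δ⁻¹ := hb.resolve_left hb0
    right
    rw [A.deg_act b x hbx0, hbdeg, hδ, mul_inv_rev, inv_inv, mul_assoc,
      inv_mul_cancel, mul_one]
  · rw [A.act_mul, hab, hux]

end Aux

/-- The regular graded action of `S` on itself. -/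
def regAct {Γ : Type u} [Group Γ] {S : Type v} [SemigroupWithZero S] (g : Grading Γ S) :
    GradedAct g S where
  act := (· * ·)
  act_mul s t x := (mul_assoc s t x).symm
  act_zero := zero_mul
  degX := g.deg
  deg_act := g.deg_mul



/-- Lemma `strongly-gr-lemma`: for a `Γ`-graded semigroup `S` with local units, the
following are equivalent: (1) `S` is strongly graded; (2) `S_α X_β = X_{αβ}` for all
`α, β` and all unital `Γ`-graded left `S`-sets `X`; (3) `S X_α = X` for all `α` and all
unital `Γ`-graded left `S`-sets `X`. -/
theorem strongly_graded_iff_graded_acts {Γ : Type u} [Group Γ] {S : Type v}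
    [SemigroupWithZero S] (g : Grading Γ S) (hlu : HasLocalUnits S) :
    (g.IsStrong ↔
      ∀ (X : Type v) (_inst : Zero X) (A : GradedAct g X),
        (∀ x : X, ∃ (s : S) (y : X), A.act s y = x) →
        ∀ α β : Γ, Set.image2 A.act (g.comp α) (A.comp β) = A.comp (α * β)) ∧
    (g.IsStrong ↔
      ∀ (X : Type v) (_inst : Zero X) (A : GradedAct g X),
        (∀ x : X, ∃ (s : S) (y : X), A.act s y = x) →
        ∀ α : Γ, Set.image2 A.act Set.univ (A.comp α) = Set.univ) := by
  have hreg_unital : ∀ x : S, ∃ (s : S) (y : S), (regAct g).act s y = x := by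
    intro x
    obtain ⟨u, v, -, -, hus, -⟩ := hlu x
    exact ⟨u, x, hus⟩
  constructor
  · constructor
    · -- (1) → (2)
      intro hg X _ A hu α β
      ext x
      constructor
      · rintro ⟨s, hs, y, hy, rfl⟩
        rcases hs with rfl | hs
        · exact Or.inl (A.act_zero y)
        rcases hy with rfl | hy
        · exact Or.inl (act_zero_right A s)
        by_cases h0 : A.act s y = 0
        · exact Or.inl h0
        · exact Or.inr (by rw [A.deg_act s y h0, hs, hy])
      · rintro (rfl | hx)
        · exact ⟨0, Or.inl rfl, 0, Or.inl rfl, A.act_zero 0⟩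
        · by_cases h0 : x = 0
          · exact h0 ▸ ⟨0, Or.inl rfl, 0, Or.inl rfl, A.act_zero 0⟩
          obtain ⟨a, y, ha, hy, haxy⟩ := key A hg hlu hu x h0 β
          rw [hx, mul_assoc, mul_inv_cancel, mul_one] at ha
          exact ⟨a, ha, y, hy, haxy⟩
    · -- (2) → (1)
      intro h
      intro α' β'
      have h2 := h S _ (regAct g) hreg_unital α' β'
      ext s
      rw [Set.mem_mul]
      constructor
      · rintro ⟨a, ha, b, hb, rfl⟩
        have := h2 ▸ (Set.mem_image2_of_mem ha hb : a * b ∈ Set.image2 (regAct g).act (g.comp α') ((regAct g).comp β'))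
        exact this
      · intro hs
        have : s ∈ Set.image2 (regAct g).act (g.comp α') ((regAct g).comp β') := h2 ▸ hs
        obtain ⟨a, ha, b, hb, hab⟩ := this
        exact ⟨a, ha, b, hb, hab⟩
  · constructor
    · -- (1) → (3)
      intro hg X _ A hu α
      ext x
      simp only [Set.mem_univ, iff_true]
      by_cases h0 : x = 0
      · exact ⟨0, trivial, 0, Or.inl rfl, h0 ▸ A.act_zero 0⟩
      obtain ⟨a, y, -, hy, haxy⟩ := key A hg hlu hu x h0 α
      exact ⟨a, trivial, y, hy, haxy⟩
    · -- (3) → (1)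
      intro h α β
      have h3 := h S _ (regAct g) hreg_unital β
      ext s
      rw [Set.mem_mul]
      constructor
      · rintro ⟨a, ha, b, hb, rfl⟩
        rcases ha with rfl | ha
        · exact Or.inl (zero_mul b)
        rcases hb with rfl | hb
        · exact Or.inl (mul_zero a)
        by_cases h0 : a * b = 0
        · exact Or.inl h0
        · exact Or.inr (by rw [g.deg_mul a b h0, ha, hb])
      · intro hs
        rcases hs with rfl | hs
        · exact ⟨0, Or.inl rfl, 0, Or.inl rfl, zero_mul 0⟩
        have : s ∈ Set.image2 (regAct g).act Set.univ ((regAct g).comp β) := by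
          rw [h3]; trivial
        obtain ⟨a, -, b, hb, hab⟩ := this
        by_cases h0 : s = 0
        · exact h0 ▸ ⟨0, Or.inl rfl, 0, Or.inl rfl, zero_mul 0⟩
        have hab' : a * b = s := hab
        have hb0 : b ≠ 0 := by rintro rfl; exact h0 (by rw [← hab', mul_zero])
        have hbdeg : g.deg b = β := hb.resolve_left hb0
        have hadeg : g.deg a = α := by
          have h1 := g.deg_mul a b (hab' ▸ h0)
          rw [hab', hs, hbdeg] at h1
          exact mul_right_cancel h1.symm
        exact ⟨a, Or.inr hadeg, b, hb, hab'⟩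
end

section
/- Let S be a Γ-graded semigroup and let S#Γ be its smash product. Then: (1) S#Γ is a semigroup; (2) E(S#Γ) = {u P_α | u ∈ E(S)∖{0}, α ∈ Γ} ∪ {0}; (3) S has local units if and only if S#Γ has local units; (4) S is an inverse semigroup if and only if S#Γ is an inverse semigroup. -/
/-- The underlying set of the smash product `S#Γ`: formal symbols `s P_α` for nonzero
`s ∈ S` and `α ∈ Γ`, together with a zero element (`none`). -/
abbrev Smash (Γ : Type u) (S : Type v) [SemigroupWithZero S] : Type max u v :=
  Option ({ s : S // s ≠ 0 } × Γ)

open Classical in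
/-- Multiplication in the smash product `S#Γ`:
`(s P_α)(t P_β) = st P_β` if `st ≠ 0` and `t ∈ S_{αβ⁻¹}`, and `0` otherwise. -/
noncomputable def smashMul {Γ : Type u} [Group Γ] {S : Type v} [SemigroupWithZero S]
    (g : Grading Γ S) (a b : Smash Γ S) : Smash Γ S :=
  a.bind fun p => b.bind fun q =>
    if h : p.1.1 * q.1.1 ≠ 0 ∧ g.deg q.1.1 = p.2 * q.2⁻¹ then
      some (⟨p.1.1 * q.1.1, h.1⟩, q.2)
    else none

namespace SmashAux
open Classical

variable {Γ : Type u} [Group Γ] {S : Type v} [SemigroupWithZero S]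

lemma none_mul (g : Grading Γ S) (b : Smash Γ S) : smashMul g none b = none := rfl

lemma mul_none (g : Grading Γ S) (a : Smash Γ S) : smashMul g a none = none := by
  cases a <;> rfl

lemma some_mul_some (g : Grading Γ S) (p q : { s : S // s ≠ 0 } × Γ) :
    smashMul g (some p) (some q) =
      if h : p.1.1 * q.1.1 ≠ 0 ∧ g.deg q.1.1 = p.2 * q.2⁻¹ then
        some (⟨p.1.1 * q.1.1, h.1⟩, q.2) else none := rfl

lemma deg_one_of_idem (g : Grading Γ S) {u : S} (hu : u ≠ 0) (h : u * u = u) :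
    g.deg u = 1 := by
  have e := g.deg_mul u u (by rw [h]; exact hu)
  rw [h] at e
  exact (left_eq_mul.mp e)

lemma deg_inv_of (g : Grading Γ S) {s t : S} (hs : s ≠ 0) (h : s * t * s = s) :
    g.deg t = (g.deg s)⁻¹ := by
  have hsts : s * t * s ≠ 0 := by rw [h]; exact hs
  have hst : s * t ≠ 0 := fun h0 => hsts (by rw [h0, zero_mul])
  have e1 := g.deg_mul (s * t) s hsts
  rw [h, g.deg_mul s t hst] at e1
  have h2 : g.deg s * 1 = g.deg s * (g.deg t * g.deg s) := by
    rw [mul_one, ← mul_assoc, ← e1]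
  exact eq_inv_of_mul_eq_one_left (mul_left_cancel h2).symm

lemma smash_assoc (g : Grading Γ S) (a b c : Smash Γ S) :
    smashMul g (smashMul g a b) c = smashMul g a (smashMul g b c) := by
  rcases a with _ | ⟨⟨s, hs⟩, α⟩
  · rfl
  rcases b with _ | ⟨⟨t, ht⟩, β⟩
  · rw [mul_none, none_mul, mul_none]
  rcases c with _ | ⟨⟨u, hu⟩, γ⟩
  · rw [mul_none, mul_none, mul_none]
  by_cases h1 : s * t ≠ 0 ∧ g.deg t = α * β⁻¹
  · by_cases h2 : t * u ≠ 0 ∧ g.deg u = β * γ⁻¹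
    · by_cases h3 : s * t * u ≠ 0
      · have h3' : s * (t * u) ≠ 0 := by rwa [← mul_assoc]
        rw [some_mul_some g ⟨⟨s, hs⟩, α⟩ ⟨⟨t, ht⟩, β⟩, dif_pos h1,
            some_mul_some, dif_pos ⟨h3, h2.2⟩,
            some_mul_some g ⟨⟨t, ht⟩, β⟩ ⟨⟨u, hu⟩, γ⟩, dif_pos h2,
            some_mul_some, dif_pos ⟨h3', by dsimp only; rw [g.deg_mul t u h2.1, h1.2, h2.2]; group⟩]
        simp [mul_assoc]
      · push_neg at h3
        have h3' : s * (t * u) = 0 := by rwa [← mul_assoc]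
        rw [some_mul_some g ⟨⟨s, hs⟩, α⟩ ⟨⟨t, ht⟩, β⟩, dif_pos h1,
            some_mul_some, dif_neg (by simp [h3]),
            some_mul_some g ⟨⟨t, ht⟩, β⟩ ⟨⟨u, hu⟩, γ⟩, dif_pos h2,
            some_mul_some, dif_neg (by simp [h3'])]
    · rw [some_mul_some g ⟨⟨t, ht⟩, β⟩ ⟨⟨u, hu⟩, γ⟩, dif_neg h2, mul_none,
          some_mul_some g ⟨⟨s, hs⟩, α⟩ ⟨⟨t, ht⟩, β⟩, dif_pos h1, some_mul_some,
          dif_neg (fun hc => h2 ⟨fun h0 => hc.1 (by rw [mul_assoc, h0, mul_zero]), hc.2⟩)]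
  · by_cases h2 : t * u ≠ 0 ∧ g.deg u = β * γ⁻¹
    · rw [some_mul_some g ⟨⟨s, hs⟩, α⟩ ⟨⟨t, ht⟩, β⟩, dif_neg h1, none_mul,
          some_mul_some g ⟨⟨t, ht⟩, β⟩ ⟨⟨u, hu⟩, γ⟩, dif_pos h2, some_mul_some]
      rw [dif_neg]
      intro hc
      dsimp only at hc
      refine h1 ⟨fun h0 => hc.1 (by rw [← mul_assoc, h0, zero_mul]), ?_⟩
      have e := g.deg_mul t u h2.1
      rw [hc.2, h2.2] at e
      have e2 := eq_mul_inv_of_mul_eq e.symm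
      rw [e2]; group
    · rw [some_mul_some g ⟨⟨s, hs⟩, α⟩ ⟨⟨t, ht⟩, β⟩, dif_neg h1, none_mul,
          some_mul_some g ⟨⟨t, ht⟩, β⟩ ⟨⟨u, hu⟩, γ⟩, dif_neg h2, mul_none]


lemma inv_pair (g : Grading Γ S) {s t : S} (hs : s ≠ 0) (ht : t ≠ 0)
    (h1 : s * t * s = s) (h2 : t * s * t = t) (α : Γ) :
    smashMul g (smashMul g (some (⟨s, hs⟩, α)) (some (⟨t, ht⟩, g.deg s * α)))
        (some (⟨s, hs⟩, α)) = some (⟨s, hs⟩, α) ∧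
    smashMul g (smashMul g (some (⟨t, ht⟩, g.deg s * α)) (some (⟨s, hs⟩, α)))
        (some (⟨t, ht⟩, g.deg s * α)) = some (⟨t, ht⟩, g.deg s * α) := by
  have hdt : g.deg t = (g.deg s)⁻¹ := deg_inv_of g hs h1
  have hst : s * t ≠ 0 := fun h0 => hs (by rw [← h1, h0, zero_mul])
  have hts : t * s ≠ 0 := fun h0 => ht (by rw [← h2, h0, zero_mul])
  constructor
  · rw [some_mul_some, dif_pos ⟨hst, by dsimp only; rw [hdt]; group⟩,
        some_mul_some, dif_pos ⟨by dsimp only; rw [h1]; exact hs, by dsimp only; group⟩]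
    simp [h1]
  · rw [some_mul_some, dif_pos ⟨hts, by dsimp only; group⟩,
        some_mul_some, dif_pos ⟨by dsimp only; rw [h2]; exact ht, by dsimp only; rw [hdt]; group⟩]
    simp [h2]

lemma sandwich (g : Grading Γ S) {s t : S} {hs : s ≠ 0} {ht : t ≠ 0} {α β : Γ}
    (h : smashMul g (smashMul g (some (⟨s, hs⟩, α)) (some (⟨t, ht⟩, β)))
        (some (⟨s, hs⟩, α)) = some (⟨s, hs⟩, α)) :
    s * t * s = s ∧ g.deg s = β * α⁻¹ := by
  rw [some_mul_some] at h
  split_ifs at h with hc1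
  · rw [some_mul_some] at h
    split_ifs at h with hc2
    · simp only [Option.some.injEq, Prod.mk.injEq, Subtype.mk.injEq] at h
      exact ⟨h.1, hc2.2⟩
  · rw [none_mul] at h
    exact absurd h (by simp)

end SmashAux

open SmashAux in
/-- Lemma `hgyfhyfhf1` on the smash product `S#Γ` of a `Γ`-graded semigroup `S`:
(1) `S#Γ` is a semigroup (multiplication is associative);
(2) `E(S#Γ) = {u P_α | u ∈ E(S) \ {0}, α ∈ Γ} ∪ {0}`;
(3) `S` has local units iff `S#Γ` has local units;
(4) `S` is an inverse semigroup iff `S#Γ` is an inverse semigroup. -/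
theorem smash_product_props {Γ : Type u} [Group Γ] {S : Type v} [SemigroupWithZero S]
    (g : Grading Γ S) :
    (∀ a b c : Smash Γ S, smashMul g (smashMul g a b) c = smashMul g a (smashMul g b c)) ∧
    (∀ a : Smash Γ S, smashMul g a a = a ↔
      (a = none ∨ ∃ (u : S) (hu : u ≠ 0) (α : Γ), u * u = u ∧ a = some (⟨u, hu⟩, α))) ∧
    (HasLocalUnits S ↔
      ∀ a : Smash Γ S, ∃ u v : Smash Γ S,
        smashMul g u u = u ∧ smashMul g v v = v ∧
        smashMul g u a = a ∧ smashMul g a v = a) ∧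
    ((∀ s : S, ∃! t : S, s * t * s = s ∧ t * s * t = t) ↔
      (∀ a : Smash Γ S, ∃! b : Smash Γ S,
        smashMul g (smashMul g a b) a = a ∧ smashMul g (smashMul g b a) b = b)) := by
  classical
  refine ⟨smash_assoc g, ?_, ?_, ?_⟩
  · -- (2) idempotents
    intro a
    constructor
    · intro h
      rcases a with _ | ⟨⟨s, hs⟩, α⟩
      · exact Or.inl rfl
      · right
        rw [some_mul_some] at h
        split_ifs at h with hc
        simp only [Option.some.injEq, Prod.mk.injEq, Subtype.mk.injEq] at h
        exact ⟨s, hs, α, h.1, rfl⟩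
    · rintro (rfl | ⟨u, hu, α, huu, rfl⟩)
      · rfl
      · rw [some_mul_some, dif_pos ⟨by dsimp only; rw [huu]; exact hu,
          by dsimp only; rw [deg_one_of_idem g hu huu]; group⟩]
        simp [huu]
  · -- (3) local units
    constructor
    · intro hS a
      rcases a with _ | ⟨⟨s, hs⟩, α⟩
      · exact ⟨none, none, rfl, rfl, rfl, rfl⟩
      · obtain ⟨u, v, huu, hvv, hus, hsv⟩ := hS s
        have hu0 : u ≠ 0 := fun h0 => hs (by rw [← hus, h0, zero_mul])
        have hv0 : v ≠ 0 := fun h0 => hs (by rw [← hsv, h0, mul_zero])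
        have hdu := deg_one_of_idem g hu0 huu
        have hdv := deg_one_of_idem g hv0 hvv
        refine ⟨some (⟨u, hu0⟩, g.deg s * α), some (⟨v, hv0⟩, α), ?_, ?_, ?_, ?_⟩
        · rw [some_mul_some, dif_pos ⟨by dsimp only; rw [huu]; exact hu0,
            by dsimp only; rw [hdu]; group⟩]
          simp [huu]
        · rw [some_mul_some, dif_pos ⟨by dsimp only; rw [hvv]; exact hv0,
            by dsimp only; rw [hdv]; group⟩]
          simp [hvv]
        · rw [some_mul_some, dif_pos ⟨by dsimp only; rw [hus]; exact hs,
            by dsimp only; group⟩]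
          simp [hus]
        · rw [some_mul_some, dif_pos ⟨by dsimp only; rw [hsv]; exact hs,
            by dsimp only; rw [hdv]; group⟩]
          simp [hsv]
    · intro h s
      by_cases hs : s = 0
      · exact ⟨0, 0, by simp, by simp, by simp [hs], by simp [hs]⟩
      · obtain ⟨U, V, hUU, hVV, hUa, haV⟩ := h (some (⟨s, hs⟩, g.deg s))
        rcases U with _ | ⟨⟨u, hu⟩, δ⟩
        · rw [none_mul] at hUa; exact absurd hUa (by simp)
        rcases V with _ | ⟨⟨v, hv⟩, ε⟩
        · rw [mul_none] at haV; exact absurd haV (by simp)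
        rw [some_mul_some] at hUU hVV hUa haV
        split_ifs at hUU with hc1
        split_ifs at hVV with hc2
        split_ifs at hUa with hc3
        split_ifs at haV with hc4
        simp only [Option.some.injEq, Prod.mk.injEq, Subtype.mk.injEq]
          at hUU hVV hUa haV
        exact ⟨u, v, hUU.1, hVV.1, hUa.1, haV.1⟩
  · -- (4) inverse semigroup
    constructor
    · intro hS a
      rcases a with _ | ⟨⟨s, hs⟩, α⟩
      · refine ⟨none, ⟨rfl, rfl⟩, ?_⟩
        intro b hb
        obtain ⟨hb1, hb2⟩ := hb
        rw [mul_none, none_mul] at hb2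
        exact hb2.symm
      · obtain ⟨t, ⟨ht1, ht2⟩, htu⟩ := hS s
        have ht0 : t ≠ 0 := fun h0 => hs (by rw [← ht1, h0, mul_zero, zero_mul])
        refine ⟨some (⟨t, ht0⟩, g.deg s * α), inv_pair g hs ht0 ht1 ht2 α, ?_⟩
        intro b hb
        obtain ⟨hb1, hb2⟩ := hb
        rcases b with _ | ⟨⟨t', ht'⟩, β'⟩
        · rw [mul_none, none_mul] at hb1
          exact absurd hb1 (by simp)
        have c1 := sandwich g hb1
        have c2 := sandwich g hb2
        have he : t' = t := htu t' ⟨c1.1, c2.1⟩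
        have hβ : β' = g.deg s * α := by rw [c1.2]; group
        subst he; subst hβ
        rfl
    · intro h s
      by_cases hs : s = 0
      · subst hs
        refine ⟨0, ⟨by simp, by simp⟩, fun t ht => ?_⟩
        have h2 := ht.2
        rw [mul_zero, zero_mul] at h2
        exact h2.symm
      · obtain ⟨b, ⟨hb1, hb2⟩, hbu⟩ := h (some (⟨s, hs⟩, g.deg s))
        rcases b with _ | ⟨⟨t, ht⟩, β⟩
        · rw [mul_none, none_mul] at hb1
          exact absurd hb1 (by simp)
        have c1 := sandwich g hb1
        have c2 := sandwich g hb2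
        refine ⟨t, ⟨c1.1, c2.1⟩, fun t' ht' => ?_⟩
        have ht'0 : t' ≠ 0 := fun h0 => hs (by rw [← ht'.1, h0, mul_zero, zero_mul])
        have hp := inv_pair g hs ht'0 ht'.1 ht'.2 (g.deg s)
        have he := hbu (some (⟨t', ht'0⟩, g.deg s * g.deg s)) ⟨hp.1, hp.2⟩
        simp only [Option.some.injEq, Prod.mk.injEq, Subtype.mk.injEq] at he
        exact he.1
end

section
/- Let S be a Γ-graded semigroup with local units and S_Γ the corresponding stable graded Rees matrix semigroup. Then: (1) E(S_Γ) = {e_{αα}(u) | u ∈ E(S), α ∈ Γ}; (2) S_Γ has local units; (3) S_Γ is strongly Γ-graded; (4) the map φ : S#Γ → (S_Γ)_ε defined by φ(s P_α) = e_{deg(s)α, α}(s) for nonzero sP_α and φ(0) = 0 is a semigroup isomorphism; (5) S is an inverse semigroup if and only if S_Γ is an inverse semigroup. -/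
/-- The underlying set of the stable graded Rees matrix semigroup `S_Γ`: elements
`e_{αβ}(s)` with `s ≠ 0` (all `e_{αβ}(0)` are identified with the zero, `none`). -/
abbrev ReesStable (Γ : Type u) (S : Type v) [SemigroupWithZero S] : Type max u v :=
  Option (Γ × { s : S // s ≠ 0 } × Γ)

open Classical in
/-- Multiplication in `S_Γ`: `e_{αβ}(s) e_{δγ}(t) = e_{αγ}(st)` if `β = δ`, else `0`. -/
noncomputable def reesMul {Γ : Type u} {S : Type v} [SemigroupWithZero S]
    (a b : ReesStable Γ S) : ReesStable Γ S :=
  a.bind fun p => b.bind fun q =>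
    if h : p.2.2 = q.1 ∧ p.2.1.1 * q.2.1.1 ≠ 0 then
      some (p.1, ⟨p.2.1.1 * q.2.1.1, h.2⟩, q.2.2)
    else none

/-- The `Γ`-grading of `S_Γ`: `deg (e_{αβ}(s)) = α⁻¹ (deg s) β`. -/
def reesDeg {Γ : Type u} [Group Γ] {S : Type v} [SemigroupWithZero S]
    (g : Grading Γ S) : ReesStable Γ S → Γ
  | some p => p.1⁻¹ * g.deg p.2.1.1 * p.2.2
  | none => 1

/-- The component `(S_Γ)_γ`. -/
def reesComp {Γ : Type u} [Group Γ] {S : Type v} [SemigroupWithZero S]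
    (g : Grading Γ S) (γ : Γ) : Set (ReesStable Γ S) :=
  {a | a = none ∨ reesDeg g a = γ}

/-- The map `φ : S#Γ → (S_Γ)_ε`, `s P_α ↦ e_{deg(s)α, α}(s)`, `0 ↦ 0`. -/
def smashToRees {Γ : Type u} [Group Γ] {S : Type v} [SemigroupWithZero S]
    (g : Grading Γ S) : Smash Γ S → ReesStable Γ S :=
  Option.map fun p => (g.deg p.1.1 * p.2, p.1, p.2)

-- AUX START
section Aux
open Classical
set_option linter.unusedSectionVars false

variable {Γ : Type u} [Group Γ] {S : Type v} [SemigroupWithZero S]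

@[simp] lemma reesMul_none_left (b : ReesStable Γ S) : reesMul none b = none := rfl

@[simp] lemma reesMul_none_right (a : ReesStable Γ S) : reesMul a none = none := by
  cases a <;> rfl

lemma reesMul_some_some (α β δ γ : Γ) (s t : {x : S // x ≠ 0}) :
    reesMul (some (α, s, β)) (some (δ, t, γ)) =
      if h : β = δ ∧ (s : S) * t ≠ 0 then some (α, ⟨(s : S) * t, h.2⟩, γ) else none := rfl

lemma reesMul_pos (α β γ : Γ) (s t : {x : S // x ≠ 0}) (h : (s : S) * t ≠ 0) :
    reesMul (some (α, s, β)) (some (β, t, γ)) = some (α, ⟨(s : S) * t, h⟩, γ) := by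
  rw [reesMul_some_some, dif_pos ⟨rfl, h⟩]

lemma reesMul_eq_some {α β δ γ μ ν : Γ} {s t w : {x : S // x ≠ 0}}
    (h : reesMul (some (α, s, β)) (some (δ, t, γ)) = some (μ, w, ν)) :
    β = δ ∧ μ = α ∧ ν = γ ∧ (w : S) = (s : S) * t := by
  rw [reesMul_some_some] at h
  split_ifs at h with hc
  · simp only [Option.some.injEq, Prod.mk.injEq] at h
    exact ⟨hc.1, h.1.symm, h.2.2.symm, (congrArg Subtype.val h.2.1).symm⟩

lemma smashMul_some_some (g : Grading Γ S) (s t : {x : S // x ≠ 0}) (α β : Γ) :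
    smashMul g (some (s, α)) (some (t, β)) =
      if h : (s : S) * t ≠ 0 ∧ g.deg t = α * β⁻¹ then some (⟨(s : S) * t, h.1⟩, β)
      else none := rfl

@[simp] lemma smashToRees_none (g : Grading Γ S) : smashToRees g none = none := rfl

@[simp] lemma smashToRees_some (g : Grading Γ S) (s : {x : S // x ≠ 0}) (α : Γ) :
    smashToRees g (some (s, α)) = some (g.deg s * α, s, α) := rfl

end Aux
-- AUX END

/-- Proposition `hgyfhyfhf` on the stable graded Rees matrix semigroup `S_Γ` of a
`Γ`-graded semigroup `S` with local units:
(1) `E(S_Γ) = {e_{αα}(u) | u ∈ E(S), α ∈ Γ}` (with `e_{αα}(0) = 0`);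
(2) `S_Γ` has local units;
(3) `S_Γ` is strongly `Γ`-graded;
(4) `φ : s P_α ↦ e_{deg(s)α,α}(s)` is a semigroup isomorphism `S#Γ ≅ (S_Γ)_ε`;
(5) `S` is an inverse semigroup iff `S_Γ` is an inverse semigroup. -/
theorem stable_rees_matrix_props {Γ : Type u} [Group Γ] {S : Type v}
    [SemigroupWithZero S] (g : Grading Γ S) (hlu : HasLocalUnits S) :
    (∀ a : ReesStable Γ S, reesMul a a = a ↔
      (a = none ∨ ∃ (α : Γ) (u : S) (hu : u ≠ 0), u * u = u ∧ a = some (α, ⟨u, hu⟩, α))) ∧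
    (∀ a : ReesStable Γ S, ∃ u v : ReesStable Γ S,
      reesMul u u = u ∧ reesMul v v = v ∧ reesMul u a = a ∧ reesMul a v = a) ∧
    (∀ γ δ : Γ, Set.image2 (reesMul (Γ := Γ) (S := S))
        (reesComp g γ) (reesComp g δ) = reesComp g (γ * δ)) ∧
    (Function.Injective (smashToRees g) ∧
     Set.range (smashToRees g) = reesComp g 1 ∧
     (∀ a b : Smash Γ S,
        smashToRees g (smashMul g a b) = reesMul (smashToRees g a) (smashToRees g b))) ∧
    ((∀ s : S, ∃! t : S, s * t * s = s ∧ t * s * t = t) ↔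
      (∀ a : ReesStable Γ S, ∃! b : ReesStable Γ S,
        reesMul (reesMul a b) a = a ∧ reesMul (reesMul b a) b = b)) := by
  refine ⟨?part1, ?part2, ?part3, ⟨?inj, ?range, ?mul⟩, ?part5⟩
  case part1 =>
    intro a
    constructor
    · intro h
      cases a with
      | none => exact Or.inl rfl
      | some p =>
        obtain ⟨α, s, β⟩ := p
        obtain ⟨h1, h2, h3, h4⟩ := reesMul_eq_some h
        exact Or.inr ⟨α, s.1, s.2, h4.symm, by rw [h1]⟩
    · rintro (rfl | ⟨α, u, hu, huu, rfl⟩)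
      · rfl
      · rw [reesMul_pos α α α _ _ (by rw [huu]; exact hu)]
        simp [huu]
  case part2 =>
    intro a
    cases a with
    | none => exact ⟨none, none, rfl, rfl, rfl, rfl⟩
    | some p =>
      obtain ⟨α, s, β⟩ := p
      obtain ⟨u, v, huu, hvv, hus, hsv⟩ := hlu s.1
      have hu0 : u ≠ 0 := fun h => s.2 (by rw [← hus, h, zero_mul])
      have hv0 : v ≠ 0 := fun h => s.2 (by rw [← hsv, h, mul_zero])
      refine ⟨some (α, ⟨u, hu0⟩, α), some (β, ⟨v, hv0⟩, β), ?_, ?_, ?_, ?_⟩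
      · rw [reesMul_pos α α α _ _ (by rw [huu]; exact hu0)]; simp [huu]
      · rw [reesMul_pos β β β _ _ (by rw [hvv]; exact hv0)]; simp [hvv]
      · rw [reesMul_pos α α β _ _ (by rw [hus]; exact s.2)]; simp [hus]
      · rw [reesMul_pos α β β _ _ (by rw [hsv]; exact s.2)]; simp [hsv]
  case part3 =>
    intro γ δ
    ext c
    simp only [Set.mem_image2]
    constructor
    · rintro ⟨a, ha, b, hb, rfl⟩
      cases a with
      | none => exact Or.inl rfl
      | some p =>
        cases b with
        | none => exact Or.inl (reesMul_none_right _)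
        | some q =>
          obtain ⟨α, s, β⟩ := p
          obtain ⟨β', t, γ'⟩ := q
          rw [reesMul_some_some]
          split_ifs with hc
          · rcases ha with ha | ha
            · exact absurd ha (by simp)
            rcases hb with hb | hb
            · exact absurd hb (by simp)
            refine Or.inr ?_
            simp only [reesDeg] at ha hb ⊢
            rw [g.deg_mul _ _ hc.2, ← ha, ← hb, hc.1]
            group
          · exact Or.inl rfl
    · rintro (rfl | hc)
      · exact ⟨none, Or.inl rfl, none, Or.inl rfl, rfl⟩
      cases c with
      | none => exact ⟨none, Or.inl rfl, none, Or.inl rfl, rfl⟩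
      | some p =>
        obtain ⟨α, w, β⟩ := p
        simp only [reesDeg] at hc
        obtain ⟨u, v, huu, hvv, huw, hwv⟩ := hlu w.1
        have hv0 : v ≠ 0 := fun h => w.2 (by rw [← hwv, h, mul_zero])
        have hwv0 : (w : S) * v ≠ 0 := by rw [hwv]; exact w.2
        have hdv : g.deg v = 1 := by
          have h2 := g.deg_mul w.1 v hwv0
          rw [hwv] at h2
          exact (mul_eq_left.mp h2.symm)
        set μ := (g.deg w.1)⁻¹ * α * γ with hμ
        refine ⟨some (α, w, μ), Or.inr ?_, some (μ, ⟨v, hv0⟩, β), Or.inr ?_, ?_⟩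
        · simp only [reesDeg, hμ]; group
        · have hw : g.deg w.1 = α * (γ * δ) * β⁻¹ := by rw [← hc]; group
          simp only [reesDeg, hμ, hdv, hw]; group
        · rw [reesMul_pos α μ β _ _ hwv0]
          simp [hwv]
  case inj =>
    intro a b h
    cases a with
    | none => cases b with
      | none => rfl
      | some q => exact absurd h (by simp [smashToRees])
    | some p =>
      cases b with
      | none => exact absurd h (by simp [smashToRees])
      | some q =>
        simp only [smashToRees, Option.map_some, Option.some.injEq, Prod.mk.injEq] at h
        obtain ⟨s, α⟩ := p
        obtain ⟨t, β⟩ := q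
        simp only [Prod.mk.injEq] at h
        rw [h.2.1, h.2.2]
  case range =>
    ext c
    constructor
    · rintro ⟨a, rfl⟩
      cases a with
      | none => exact Or.inl rfl
      | some p =>
        obtain ⟨s, α⟩ := p
        refine Or.inr ?_
        simp only [smashToRees_some, reesDeg]
        group
    · rintro (rfl | hc)
      · exact ⟨none, rfl⟩
      cases c with
      | none => exact ⟨none, rfl⟩
      | some p =>
        obtain ⟨α, s, β⟩ := p
        simp only [reesDeg] at hc
        have hα : g.deg s.1 * β = α := by
          have h2 := congrArg (α * ·) hc
          simpa [mul_assoc] using h2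
        exact ⟨some (s, β), by simp [hα]⟩
  case mul =>
    intro a b
    cases a with
    | none => rfl
    | some p =>
      cases b with
      | none => simp [smashMul]
      | some q =>
        obtain ⟨s, α⟩ := p
        obtain ⟨t, β⟩ := q
        rw [smashMul_some_some, smashToRees_some, smashToRees_some, reesMul_some_some]
        by_cases h : (s : S) * t ≠ 0 ∧ g.deg t = α * β⁻¹
        · rw [dif_pos h, dif_pos ⟨by rw [h.2]; group, h.1⟩]
          have hd : g.deg ((s : S) * t) * β = g.deg s.1 * α := by
            rw [g.deg_mul _ _ h.1, h.2]; group
          simp [hd]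
        · rw [dif_neg h, dif_neg (fun hc => h ⟨hc.2, by rw [hc.1]; group⟩)]
          rfl
  case part5 =>
    constructor
    · intro hS a
      cases a with
      | none =>
        refine ⟨none, ⟨rfl, rfl⟩, ?_⟩
        rintro b ⟨hb1, hb2⟩
        cases b with
        | none => rfl
        | some q =>
          rw [reesMul_none_right, reesMul_none_left] at hb2
          exact absurd hb2 (by simp)
      | some p =>
        obtain ⟨α, s, β⟩ := p
        obtain ⟨t, ⟨hts1, hts2⟩, htu⟩ := hS s.1
        have ht0 : t ≠ 0 := fun h => s.2 (by rw [← hts1, h, mul_zero, zero_mul])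
        have hst0 : (s : S) * t ≠ 0 := fun h => s.2 (by rw [← hts1, h, zero_mul])
        have hts0 : t * (s : S) ≠ 0 := fun h => ht0 (by rw [← hts2, h, zero_mul])
        refine ⟨some (β, ⟨t, ht0⟩, α), ⟨?_, ?_⟩, ?_⟩
        · rw [reesMul_pos α β α _ _ hst0,
            reesMul_pos α α β _ _ (by rw [hts1]; exact s.2)]
          simp [hts1]
        · rw [reesMul_pos β α β _ _ hts0,
            reesMul_pos β β α _ _ (by rw [hts2]; exact ht0)]
          simp [hts2]
        · rintro b ⟨hb1, hb2⟩
          cases b with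
          | none =>
            rw [reesMul_none_right, reesMul_none_left] at hb1
            exact absurd hb1 (by simp)
          | some q =>
            obtain ⟨δ, t', γ⟩ := q
            rw [reesMul_some_some] at hb1
            split_ifs at hb1 with h1
            · obtain ⟨h2, _, h3, h4⟩ := reesMul_eq_some hb1
              -- h1 : β = δ ∧ s*t' ≠ 0 ; h2 : γ = α ; h4 : s = s*t'*s
              have hst's : (s : S) * t' * s = s := h4.symm
              have ht's0 : (t' : S) * s ≠ 0 := fun h => s.2 (by
                rw [← hst's, mul_assoc, h, mul_zero])
              rw [reesMul_some_some] at hb2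
              rw [dif_pos ⟨h2, ht's0⟩] at hb2
              rw [reesMul_some_some] at hb2
              split_ifs at hb2 with h5
              simp only [Option.some.injEq, Prod.mk.injEq] at hb2
              have ht'st' : (t' : S) * s * t' = t' := congrArg Subtype.val hb2.2.1
              have := htu t'.1 ⟨hst's, ht'st'⟩
              simp only [Option.some.injEq, Prod.mk.injEq, Subtype.ext_iff]
              exact ⟨h1.1.symm, this, h2⟩
            · rw [reesMul_none_left] at hb1
              exact absurd hb1 (by simp)
    · intro hR s
      by_cases hs : s = 0
      · subst hs
        refine ⟨0, ⟨by simp, by simp⟩, ?_⟩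
        rintro t ⟨_, ht⟩
        rw [← ht, mul_zero, zero_mul]
      · obtain ⟨b, ⟨hb1, hb2⟩, hbu⟩ := hR (some (1, ⟨s, hs⟩, 1))
        cases b with
        | none =>
          rw [reesMul_none_right, reesMul_none_left] at hb1
          exact absurd hb1 (by simp)
        | some q =>
          obtain ⟨δ, t, γ⟩ := q
          rw [reesMul_some_some] at hb1
          split_ifs at hb1 with h1
          · -- h1 : 1 = δ ∧ s * t ≠ 0
            obtain ⟨h2, _, _, h4⟩ := reesMul_eq_some hb1
            -- h2 : γ = 1, h4 : s = s * t * s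
            have hsts : s * t * s = s := h4.symm
            have hts0 : (t : S) * s ≠ 0 := fun h => hs (by
              rw [← hsts, mul_assoc, h, mul_zero])
            rw [reesMul_some_some, dif_pos ⟨h2, hts0⟩, reesMul_some_some] at hb2
            split_ifs at hb2 with h5
            simp only [Option.some.injEq, Prod.mk.injEq] at hb2
            have htst : (t : S) * s * t = t := congrArg Subtype.val hb2.2.1
            refine ⟨t.1, ⟨hsts, htst⟩, ?_⟩
            intro t' ⟨h1', h2'⟩
            have ht'0 : t' ≠ 0 := fun h => hs (by rw [← h1', h, mul_zero, zero_mul])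
            have hst'0 : s * t' ≠ 0 := fun h => hs (by rw [← h1', h, zero_mul])
            have ht's0 : t' * s ≠ 0 := fun h => ht'0 (by rw [← h2', h, zero_mul])
            have hb' := hbu (some (1, ⟨t', ht'0⟩, 1)) ⟨?_, ?_⟩
            · simp only [Option.some.injEq, Prod.mk.injEq, Subtype.ext_iff] at hb'
              exact hb'.2.1
            · rw [reesMul_pos 1 1 1 _ _ hst'0,
                reesMul_pos 1 1 1 _ _ (by rw [h1']; exact hs)]
              simp [h1']
            · rw [reesMul_pos 1 1 1 _ _ ht's0,
                reesMul_pos 1 1 1 _ _ (by rw [h2']; exact ht'0)]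
              simp [h2']
          · rw [reesMul_none_left] at hb1
            exact absurd hb1 (by simp)
end

section
/- Let X be a set with |X| ≥ 3. Then any group grading on the symmetric inverse monoid I(X) is trivial; that is, for any group Γ and any grading χ : I(X)∖{0} → Γ, one has χ(φ) = ε for every nonzero φ ∈ I(X). -/
/-- Proposition `symminverseprop`: if `|X| ≥ 3`, then any group grading on the symmetric
inverse monoid `I(X)` (modelled as the partial bijections `X ≃. X`, with composition
`f * g = g.trans f`, i.e. apply `g` first, and zero element the empty partial map `⊥`)
is trivial: every nonzero element has degree `ε`. -/
theorem symmetric_inverse_monoid_grading_trivial {X : Type v}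
    (hX : 3 ≤ Cardinal.mk X) {Γ : Type u} [Group Γ] (χ : (X ≃. X) → Γ)
    (hχ : ∀ f g : X ≃. X, g.trans f ≠ ⊥ → χ (g.trans f) = χ f * χ g) :
    ∀ f : X ≃. X, f ≠ ⊥ → χ f = 1 := by
  classical
  -- single a b is nonzero
  have hsne : ∀ a b : X, (PEquiv.single a b : X ≃. X) ≠ ⊥ := by
    intro a b h
    have := congrArg (fun g : X ≃. X => g a) h
    simp [PEquiv.single_apply, PEquiv.bot_apply] at this
  -- cocycle
  have hcoc : ∀ a b c : X,
      χ (PEquiv.single b c) * χ (PEquiv.single a b) = χ (PEquiv.single a c) := by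
    intro a b c
    have h := hχ (PEquiv.single b c) (PEquiv.single a b)
    rw [PEquiv.single_trans_single] at h
    exact (h (hsne a c)).symm
  -- idempotents
  have hid : ∀ a : X, χ (PEquiv.single a a : X ≃. X) = 1 := by
    intro a
    have h := hcoc a a a
    exact (mul_eq_left.mp h)
  -- degree determined by any point of the graph
  have hA : ∀ (g : X ≃. X) (a b : X), g a = some b → χ g = χ (PEquiv.single a b) := by
    intro g a b hab
    have htr : (PEquiv.single a a).trans g = PEquiv.single a b :=
      PEquiv.single_trans_of_mem a (by simpa [Option.mem_def] using hab)
    have h := hχ g (PEquiv.single a a)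
    rw [htr] at h
    rw [h (hsne a b), hid a, mul_one]
  -- every single has degree 1
  have hone : ∀ a b : X, χ (PEquiv.single a b : X ≃. X) = 1 := by
    intro a b
    by_cases hab : a = b
    · subst hab; exact hid a
    · -- find a third element
      obtain ⟨z, hza, hzb⟩ : ∃ z : X, z ≠ a ∧ z ≠ b := by
        by_contra hcon
        push_neg at hcon
        have hinj : Function.Injective (fun z : X => ULift.up.{v} (decide (z = a))) := by
          intro z₁ z₂ h
          by_cases h1 : z₁ = a
          · by_cases h2 : z₂ = a
            · rw [h1, h2]
            · simp [h1, h2] at h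
          · by_cases h2 : z₂ = a
            · simp [h1, h2] at h
            · rw [hcon z₁ h1, hcon z₂ h2]
        have : Cardinal.mk X ≤ 2 := by
          calc Cardinal.mk X ≤ Cardinal.mk (ULift.{v} Bool) := Cardinal.mk_le_of_injective hinj
          _ = 2 := by simp
        exact absurd (hX.trans this) (by norm_num)
      -- 3-cycle a → b → z → a
      set σ : X ≃ X := (Equiv.swap a b).trans (Equiv.swap a z) with hσ
      have hσa : σ a = b := by
        rw [hσ]
        simp only [Equiv.trans_apply, Equiv.swap_apply_left]
        exact Equiv.swap_apply_of_ne_of_ne (Ne.symm hab) (Ne.symm hzb)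
      have hσb : σ b = z := by
        rw [hσ]
        simp only [Equiv.trans_apply, Equiv.swap_apply_right, Equiv.swap_apply_left]
      have hσz : σ z = a := by
        rw [hσ]
        simp only [Equiv.trans_apply]
        rw [Equiv.swap_apply_of_ne_of_ne hza hzb, Equiv.swap_apply_right]
      have h1 : χ (PEquiv.single a b : X ≃. X) = χ σ.toPEquiv :=
        (hA σ.toPEquiv a b (by rw [Equiv.toPEquiv_apply, hσa])).symm
      have h2 : χ (PEquiv.single b z : X ≃. X) = χ σ.toPEquiv :=
        (hA σ.toPEquiv b z (by rw [Equiv.toPEquiv_apply, hσb])).symm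
      have h3 : χ (PEquiv.single z a : X ≃. X) = χ σ.toPEquiv :=
        (hA σ.toPEquiv z a (by rw [Equiv.toPEquiv_apply, hσz])).symm
      -- transposition a ↔ b
      have h4 : χ (PEquiv.single b a : X ≃. X) = χ (PEquiv.single a b : X ≃. X) := by
        have ha : (Equiv.swap a b).toPEquiv a = some b := by
          rw [Equiv.toPEquiv_apply, Equiv.swap_apply_left]
        have hb : (Equiv.swap a b).toPEquiv b = some a := by
          rw [Equiv.toPEquiv_apply, Equiv.swap_apply_right]
        rw [← hA _ a b ha, ← hA _ b a hb]
      set g := χ σ.toPEquiv with hg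
      -- g² = 1 from transposition symmetry
      have hsq : g * g = 1 := by
        have := hcoc a b a
        rw [h4] at this
        rw [← h1, this, hid]
      -- g³ = 1 from the 3-cycle
      have hcube : g * (g * g) = 1 := by
        have e1 := hcoc a b z   -- χ(b z) * χ(a b) = χ(a z)
        have e2 := hcoc a z a   -- χ(z a) * χ(a z) = χ(a a)
        rw [h1, h2] at e1
        rw [h3, hid] at e2
        rw [e1]
        exact e2
      have hg1 : g = 1 := by
        rw [hsq, mul_one] at hcube
        exact hcube
      rw [h1, hg1]
  intro f hf
  obtain ⟨a, b, hab⟩ : ∃ a b : X, f a = some b := by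
    by_contra hcon
    push_neg at hcon
    apply hf
    ext x y
    have := hcon x
    cases h : f x with
    | none => simp [PEquiv.bot_apply, h]
    | some b => exact absurd h (by simpa using hcon x b)
  rw [hA f a b hab]
  exact hone a b
end

section
/- Let X be a nonempty Γ-graded set. Then: (1) I^gr(X) is a Γ-graded inverse semigroup; (2) I^gr(X) is strongly Γ-graded if and only if |X_α| = |X_β| for all α, β ∈ Γ; (3) I^gr(X) is locally strongly Γ-graded if and only if X_α ≠ ∅ for every α ∈ Γ. -/
variable {Γ : Type u} [Group Γ] {X : Type v}

/-- Composition in the symmetric inverse monoid `I(X)` (partial bijections of `X`):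
`imul f g = f ∘ g` (apply `g` first). -/
def imul (f g : X ≃. X) : X ≃. X := g.trans f

/-- For a `Γ`-graded set `X` (given by a partition map `degX : X → Γ`), the component
`I(X)_α = {φ ∈ I(X) | φ(Dom(φ)_β) ⊆ X_{αβ} for all β}` of the graded symmetric inverse
monoid. -/
def IComp (degX : X → Γ) (α : Γ) : Set (X ≃. X) :=
  {f | ∀ x y : X, f x = some y → degX y = α * degX x}

/-- The graded symmetric inverse monoid `I^gr(X) = ⋃_α I(X)_α`. -/
def IGr (degX : X → Γ) : Set (X ≃. X) := {f | ∃ α : Γ, f ∈ IComp degX α}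

theorem imul_apply (f g : X ≃. X) (x : X) : imul f g x = (g x).bind f := rfl

theorem imul_eq_some {f g : X ≃. X} {x y : X} :
    imul f g x = some y ↔ ∃ z, g x = some z ∧ f z = some y := by
  rw [imul_apply, Option.bind_eq_some_iff]

theorem aux_mul_mem {degX : X → Γ} {α β : Γ} {f g : X ≃. X} (hf : f ∈ IComp degX α)
    (hg : g ∈ IComp degX β) : imul f g ∈ IComp degX (α * β) := by
  intro x y hxy
  rcases imul_eq_some.1 hxy with ⟨z, hz, hzy⟩
  rw [hf z y hzy, hg x z hz, mul_assoc]

theorem aux_symm_mem {degX : X → Γ} {α : Γ} {f : X ≃. X} (hf : f ∈ IComp degX α) :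
    f.symm ∈ IComp degX α⁻¹ := by
  intro x y hxy
  have := hf y x (f.eq_some_iff.1 hxy)
  rw [eq_inv_mul_iff_mul_eq, ← this]

theorem aux_fff (f : X ≃. X) : imul (imul f f.symm) f = f := by
  apply PEquiv.ext; intro x
  show (f x).bind ⇑(f.symm.trans f) = f x
  cases hx : f x with
  | none => rfl
  | some y =>
    show (f.symm y).bind f = some y
    rw [f.eq_some_iff.2 hx]
    exact hx

theorem aux_ne_bot {f : X ≃. X} (h : f ≠ ⊥) : ∃ x y, f x = some y := by
  by_contra hc
  push_neg at hc
  apply h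
  apply PEquiv.ext; intro x
  cases hx : f x with
  | none => rw [PEquiv.bot_apply]
  | some y => exact absurd hx (hc x y)

theorem aux_inv_unique {f h : X ≃. X} (h1 : imul (imul f h) f = f)
    (h2 : imul (imul h f) h = h) : h = f.symm := by
  have key1 : ∀ x y, f x = some y → h y = some x := by
    intro x y hxy
    have e : (h y).bind ⇑f = some y := by
      calc (h y).bind ⇑f = (f x).bind ⇑(h.trans f) := by rw [hxy]; rfl
        _ = (imul (imul f h) f) x := rfl
        _ = f x := by rw [h1]
        _ = some y := hxy
    rcases Option.bind_eq_some_iff.1 e with ⟨z, hz, hzy⟩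
    have : z = x :=
      Option.some_injective _ ((f.eq_some_iff.2 hzy).symm.trans (f.eq_some_iff.2 hxy))
    rw [← this]; exact hz
  have key2 : ∀ x y, h y = some x → f x = some y := by
    intro x y hxy
    have e : (f x).bind ⇑h = some x := by
      calc (f x).bind ⇑h = (h y).bind ⇑(f.trans h) := by rw [hxy]; rfl
        _ = (imul (imul h f) h) y := rfl
        _ = h y := by rw [h2]
        _ = some x := hxy
    rcases Option.bind_eq_some_iff.1 e with ⟨w, hw, hwx⟩
    have : y = w :=
      Option.some_injective _ ((h.eq_some_iff.2 hxy).symm.trans (h.eq_some_iff.2 hwx))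
    rw [this]; exact hw
  apply PEquiv.ext; intro y
  cases hy : h y with
  | some x => exact (f.eq_some_iff.2 (key2 x y hy)).symm
  | none =>
    cases hfy : f.symm y with
    | none => rfl
    | some x => exact absurd ((key1 x y (f.eq_some_iff.1 hfy)).symm.trans hy) (by simp)

theorem aux_card_le {degX : X → Γ}
    (hst : ∀ α β : Γ, Set.image2 imul (IComp degX α) (IComp degX β) = IComp degX (α * β))
    (γ δ : Γ) :
    Cardinal.mk {x : X // degX x = γ} ≤ Cardinal.mk {x : X // degX x = δ} := by
  set σ : Γ := δ * γ⁻¹ with hσ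
  have hrefl : (PEquiv.refl X) ∈ IComp degX (σ⁻¹ * σ) := by
    intro x y hxy
    rw [Option.some_inj.1 hxy.symm, inv_mul_cancel, one_mul]
  rw [← hst σ⁻¹ σ] at hrefl
  obtain ⟨g, hg, h, hh, hgh⟩ := hrefl
  have key : ∀ x : X, ∃ y, h x = some y := by
    intro x
    have hx : (imul g h) x = some x := by rw [hgh]; rfl
    rcases imul_eq_some.1 hx with ⟨y, hy, -⟩
    exact ⟨y, hy⟩
  choose F hF using key
  have hdeg : ∀ x : {x : X // degX x = γ}, degX (F x.1) = δ := by
    rintro ⟨x, hx⟩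
    have := hh x (F x) (hF x)
    rw [this, hx, hσ, inv_mul_cancel_right]
  have hinj : Function.Injective
      (fun x : {x : X // degX x = γ} => (⟨F x.1, hdeg x⟩ : {x : X // degX x = δ})) := by
    rintro ⟨x1, h1⟩ ⟨x2, h2⟩ hx
    simp only [Subtype.mk.injEq] at hx ⊢
    have e1 : h.symm (F x1) = some x1 := h.eq_some_iff.2 (hF x1)
    have e2 : h.symm (F x2) = some x2 := h.eq_some_iff.2 (hF x2)
    rw [hx] at e1
    exact Option.some_injective _ (e1.symm.trans e2)
  exact Cardinal.mk_le_of_injective hinj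

theorem aux_deg_equiv {degX : X → Γ}
    (hcard : ∀ γ δ : Γ, Cardinal.mk {x : X // degX x = γ} = Cardinal.mk {x : X // degX x = δ})
    (β : Γ) : ∃ E : X ≃ X, ∀ x, degX (E x) = β * degX x := by
  have e : ∀ γ : Γ, {x : X // degX x = γ} ≃ {x : X // degX x = β * γ} :=
    fun γ => (Cardinal.eq.1 (hcard γ (β * γ))).some
  have congr_lemma : ∀ (γ γ' : Γ) (_ : γ = γ') (x : X) (hx : degX x = γ) (hx' : degX x = γ'),
      ((e γ) ⟨x, hx⟩).1 = ((e γ') ⟨x, hx'⟩).1 := by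
    rintro γ γ' rfl x hx hx'; rfl
  set F : X → X := fun x => (e (degX x) ⟨x, rfl⟩).1 with hFdef
  have hdegF : ∀ x, degX (F x) = β * degX x := fun x => (e (degX x) ⟨x, rfl⟩).2
  have hFinj : Function.Injective F := by
    intro x1 x2 hx
    have hd : degX x1 = degX x2 := by
      have h1 : β * degX x1 = β * degX x2 := by rw [← hdegF x1, ← hdegF x2, hx]
      exact mul_left_cancel h1
    have hx' : ((e (degX x2)) ⟨x1, hd⟩).1 = ((e (degX x2)) ⟨x2, rfl⟩).1 := by
      rw [← congr_lemma (degX x1) (degX x2) hd x1 rfl hd]; exact hx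
    have := (e (degX x2)).injective (Subtype.ext hx')
    exact congrArg Subtype.val this
  have hFsurj : Function.Surjective F := by
    intro y
    have hy : degX y = β * (β⁻¹ * degX y) := by rw [mul_inv_cancel_left]
    set x := ((e (β⁻¹ * degX y)).symm ⟨y, hy⟩).1 with hxdef
    have hx : degX x = β⁻¹ * degX y := ((e (β⁻¹ * degX y)).symm ⟨y, hy⟩).2
    refine ⟨x, ?_⟩
    have h1 : F x = ((e (β⁻¹ * degX y)) ⟨x, hx⟩).1 :=
      congr_lemma (degX x) (β⁻¹ * degX y) hx x rfl hx
    rw [h1]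
    have h2 : (⟨x, hx⟩ : {x : X // degX x = β⁻¹ * degX y}) = (e (β⁻¹ * degX y)).symm ⟨y, hy⟩ :=
      Subtype.ext rfl
    rw [h2, Equiv.apply_symm_apply]
  exact ⟨Equiv.ofBijective F ⟨hFinj, hFsurj⟩, fun x => hdegF x⟩

theorem aux_single_mem {degX : X → Γ} [DecidableEq X] {γ : Γ} {a b : X}
    (h : degX b = γ * degX a) : PEquiv.single a b ∈ IComp degX γ := by
  intro x y hxy
  rcases (PEquiv.mem_single_iff x a y b).1 (Option.mem_def.2 hxy) with ⟨rfl, rfl⟩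
  exact h

/-- Proposition `meme` about `I^gr(X)` for a nonempty `Γ`-graded set `X`:
(1) `I^gr(X)` is a `Γ`-graded inverse semigroup: the components multiply correctly
    (`I(X)_α I(X)_β ⊆ I(X)_{αβ}`), are closed under the inverse
    (`(I(X)_α)⁻¹ ⊆ I(X)_{α⁻¹}`), all contain the zero `⊥`, and are otherwise disjoint;
    moreover `f.symm` is the (unique, within `I^gr(X)`) inner inverse of each
    `f ∈ I^gr(X)`;
(2) `I^gr(X)` is strongly `Γ`-graded iff `|X_α| = |X_β|` for all `α, β ∈ Γ`;
(3) `I^gr(X)` is locally strongly `Γ`-graded iff `X_α ≠ ∅` for all `α ∈ Γ`. -/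
theorem Igr_graded_inverse_semigroup [Nonempty X] (degX : X → Γ) :
    ((∀ (α β : Γ) (f g : X ≃. X), f ∈ IComp degX α → g ∈ IComp degX β →
        imul f g ∈ IComp degX (α * β)) ∧
     (∀ (α : Γ) (f : X ≃. X), f ∈ IComp degX α → f.symm ∈ IComp degX α⁻¹) ∧
     (∀ α : Γ, (⊥ : X ≃. X) ∈ IComp degX α) ∧
     (∀ (α β : Γ) (f : X ≃. X), α ≠ β → f ∈ IComp degX α → f ∈ IComp degX β → f = ⊥) ∧
     (∀ f ∈ IGr degX, imul (imul f f.symm) f = f ∧ imul (imul f.symm f) f.symm = f.symm) ∧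
     (∀ f ∈ IGr degX, ∀ h ∈ IGr degX,
        imul (imul f h) f = f → imul (imul h f) h = h → h = f.symm)) ∧
    ((∀ α β : Γ, Set.image2 imul (IComp degX α) (IComp degX β) = IComp degX (α * β)) ↔
      ∀ α β : Γ, Cardinal.mk {x : X // degX x = α} = Cardinal.mk {x : X // degX x = β}) ∧
    ((∀ α β : Γ, ∀ f ∈ IComp degX (α * β), f ≠ ⊥ →
        ∃ t ∈ Set.image2 imul (IComp degX α) (IComp degX β), t ≠ ⊥ ∧
          ∃ u : X ≃. X, imul u u = u ∧ t = imul f u) ↔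
      ∀ α : Γ, ∃ x : X, degX x = α) := by
  classical
  refine ⟨⟨fun α β f g hf hg => aux_mul_mem hf hg,
      fun α f hf => aux_symm_mem hf,
      fun α x y hxy => by simp [PEquiv.bot_apply] at hxy,
      fun α β f hαβ h1 h2 => ?_,
      fun f _ => ⟨aux_fff f, aux_fff f.symm⟩,
      fun f _ h _ h1 h2 => aux_inv_unique h1 h2⟩, ⟨?_, ?_⟩, ⟨?_, ?_⟩⟩
  · -- disjointness
    apply PEquiv.ext; intro x
    cases hx : f x with
    | none => rw [PEquiv.bot_apply]
    | some y => exact absurd (mul_right_cancel ((h1 x y hx).symm.trans (h2 x y hx))) hαβ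
  · -- strong → card eq
    intro hst γ δ
    exact le_antisymm (aux_card_le hst γ δ) (aux_card_le hst δ γ)
  · -- card eq → strong
    intro hcard α β
    apply Set.Subset.antisymm
    · exact Set.image2_subset_iff.2 fun f hf g hg => aux_mul_mem hf hg
    · intro f hf
      obtain ⟨E, hE⟩ := aux_deg_equiv hcard β
      have hp : E.toPEquiv ∈ IComp degX β := by
        intro x y hxy
        rw [Equiv.toPEquiv_apply] at hxy
        rw [← Option.some_inj.1 hxy]
        exact hE x
      have hg : imul f E.toPEquiv.symm ∈ IComp degX α := by
        have := aux_mul_mem hf (aux_symm_mem hp)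
        rwa [mul_inv_cancel_right] at this
      refine ⟨imul f E.toPEquiv.symm, hg, E.toPEquiv, hp, ?_⟩
      apply PEquiv.ext; intro x
      show (E.toPEquiv x).bind ⇑(E.toPEquiv.symm.trans f) = f x
      rw [Equiv.toPEquiv_apply]
      show (E.toPEquiv.symm (E x)).bind ⇑f = f x
      rw [← Equiv.toPEquiv_symm, Equiv.toPEquiv_apply, Equiv.symm_apply_apply]
      rfl
  · -- locally strong → fibers nonempty
    intro hlsg α
    obtain ⟨x₀⟩ := ‹Nonempty X›
    set a : Γ := degX x₀ * α⁻¹ with ha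
    have hfmem : PEquiv.single x₀ x₀ ∈ IComp degX (a * a⁻¹) := by
      apply aux_single_mem
      group
    have hfne : PEquiv.single x₀ x₀ ≠ (⊥ : X ≃. X) := by
      intro h
      have := congrArg (fun k : X ≃. X => k x₀) h
      simp [PEquiv.single_apply, PEquiv.bot_apply] at this
    obtain ⟨t, ⟨g, hg, h, hh, hgh⟩, htne, u, hu, htu⟩ := hlsg a a⁻¹ _ hfmem hfne
    obtain ⟨x, y, hxy⟩ := aux_ne_bot htne
    have hyx₀ : y = x₀ := by
      have : (imul (PEquiv.single x₀ x₀) u) x = some y := by rw [← htu]; exact hxy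
      rcases imul_eq_some.1 this with ⟨w, _, hw⟩
      exact ((PEquiv.mem_single_iff w x₀ y x₀).1 (Option.mem_def.2 hw)).2
    have ht' : (imul g h) x = some x₀ := by rw [hgh, ← hyx₀]; exact hxy
    rcases imul_eq_some.1 ht' with ⟨z, hzx, hgz⟩
    refine ⟨z, ?_⟩
    have h1 : degX x₀ = a * degX z := hg z x₀ hgz
    have h2 : degX z = a⁻¹ * degX x₀ := by rw [h1, inv_mul_cancel_left]
    rw [h2, ha]
    group
  · -- fibers nonempty → locally strong
    intro hfib α β f hf hfne
    obtain ⟨x₀, y₀, hxy⟩ := aux_ne_bot hfne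
    obtain ⟨z, hz⟩ := hfib (β * degX x₀)
    have hdeg : degX y₀ = (α * β) * degX x₀ := hf x₀ y₀ hxy
    refine ⟨PEquiv.single x₀ y₀,
      ⟨PEquiv.single z y₀, aux_single_mem (by rw [hdeg, hz, mul_assoc]),
       PEquiv.single x₀ z, aux_single_mem hz, ?_⟩, ?_,
      PEquiv.single x₀ x₀, ?_, ?_⟩
    · show (PEquiv.single x₀ z).trans (PEquiv.single z y₀) = _
      rw [PEquiv.single_trans_single]
    · intro h
      have := congrArg (fun k : X ≃. X => k x₀) h
      simp [PEquiv.single_apply, PEquiv.bot_apply] at this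
    · show (PEquiv.single x₀ x₀).trans (PEquiv.single x₀ x₀) = _
      rw [PEquiv.single_trans_single]
    · show _ = (PEquiv.single x₀ x₀).trans f
      rw [PEquiv.single_trans_of_mem x₀ (Option.mem_def.2 hxy)]
end

section
/- (Dade's theorem for inverse semigroups.) Let S be a Γ-graded inverse semigroup. Then S is strongly graded if and only if the categories Gr-S and Mod-S_ε are equivalent via the restriction functor (−)_ε : Gr-S → Mod-S_ε and the induction functor S ⊗_{S_ε} − : Mod-S_ε → Gr-S, with natural isomorphisms μ_Y : (S ⊗_{S_ε} Y)_ε → Y, s⊗y ↦ sy, and ν_X : S ⊗_{S_ε} X_ε → X, s⊗x ↦ sx. Equivalently, S is strongly graded if and only if ν_X is bijective for every object X of Gr-S. -/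
open Pointwise

/-- A `Γ`-graded pointed left `S`-set. -/
structure GrSet {Γ : Type u} [Group Γ] {S : Type w} [SemigroupWithZero S]
    (g : Grading Γ S) (X : Type v) [Zero X] where
  act : S → X → X
  act_mul : ∀ (s t : S) (x : X), act s (act t x) = act (s * t) x
  act_zero : ∀ x : X, act 0 x = 0
  degX : X → Γ
  deg_act : ∀ (s : S) (x : X), act s x ≠ 0 → degX (act s x) = g.deg s * degX x

variable {Γ : Type u} [Group Γ] {S : Type w} [SemigroupWithZero S]

/-- The relation defining the tensor product `S ⊗_{S_ε} X_ε`: `(a s, x) ∼ (a, s x)`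
for `s ∈ S_ε` and `x ∈ X_ε`. -/
def nuRel {X : Type v} [Zero X] {g : Grading Γ S} (A : GrSet g X) :
    (S × {x : X // x = 0 ∨ A.degX x = 1}) → (S × {x : X // x = 0 ∨ A.degX x = 1}) → Prop :=
  fun p q => ∃ s : S, (s = 0 ∨ g.deg s = 1) ∧ p.1 = q.1 * s ∧ (q.2 : X) = A.act s (p.2 : X)

/-- The canonical map `ν_X : S ⊗_{S_ε} X_ε → X`, `s ⊗ x ↦ s x`. -/
def nuMap {X : Type v} [Zero X] {g : Grading Γ S} (A : GrSet g X) :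
    Quot (nuRel A) → X :=
  Quot.lift (fun p => A.act p.1 (p.2 : X)) (by
    rintro ⟨a, x⟩ ⟨b, y⟩ ⟨s, -, h1, h2⟩
    dsimp only at h1 h2 ⊢
    rw [h1, h2]
    exact (A.act_mul b s (x : X)).symm)

section DadeAux

variable {S'' : Type*} [SemigroupWithZero S'']

/-- In a semigroup with unique von Neumann inverses, the product of two idempotents
is idempotent. -/
lemma dade_idem_mul (hinv : ∀ s : S'', ∃! t : S'', s * t * s = s ∧ t * s * t = t)
    {e f : S''} (he : e * e = e) (hf : f * f = f) : (e * f) * (e * f) = e * f := by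
  obtain ⟨a, ⟨h1, h2⟩, huniq⟩ := hinv (e * f)
  have he1 : ∀ x : S'', e * (e * x) = e * x := fun x => by rw [← mul_assoc, he]
  have hf1 : ∀ x : S'', f * (f * x) = f * x := fun x => by rw [← mul_assoc, hf]
  have h2' : ∀ x : S'', a * (e * (f * (a * x))) = a * x := fun x => by
    simpa [mul_assoc] using congrArg (· * x) h2
  have h1f : e * (f * (a * (e * f))) = e * f := by simpa [mul_assoc] using h1
  have cA1 : (e * f) * (f * a * e) * (e * f) = e * f := by
    simp only [mul_assoc]
    rw [hf1, he1]
    exact h1f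
  have cA2 : (f * a * e) * (e * f) * (f * a * e) = f * a * e := by
    simp only [mul_assoc]
    rw [he1, hf1, h2']
  have hfae : f * a * e = a := huniq _ ⟨cA1, cA2⟩
  have haa : a * a = a := by
    conv_lhs => rw [← hfae]
    simp only [mul_assoc]
    rw [h2', ← mul_assoc, hfae]
  obtain ⟨c, -, hcuniq⟩ := hinv a
  have hefc : e * f = c := hcuniq _ ⟨h2, h1⟩
  have hac : a = c := hcuniq _ ⟨by rw [haa, haa], by rw [haa, haa]⟩
  rw [hefc.trans hac.symm, haa]

/-- In a semigroup with unique von Neumann inverses, idempotents commute. -/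
lemma dade_idem_comm (hinv : ∀ s : S'', ∃! t : S'', s * t * s = s ∧ t * s * t = t)
    {e f : S''} (he : e * e = e) (hf : f * f = f) : e * f = f * e := by
  have hef := dade_idem_mul hinv he hf
  have hfe := dade_idem_mul hinv hf he
  have he1 : ∀ x : S'', e * (e * x) = e * x := fun x => by rw [← mul_assoc, he]
  have hf1 : ∀ x : S'', f * (f * x) = f * x := fun x => by rw [← mul_assoc, hf]
  obtain ⟨d, -, hduniq⟩ := hinv (e * f)
  have c1 : (e * f) * (f * e) * (e * f) = e * f := by
    simp only [mul_assoc]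
    rw [hf1, he1]
    simpa [mul_assoc] using hef
  have c2 : (f * e) * (e * f) * (f * e) = f * e := by
    simp only [mul_assoc]
    rw [he1, hf1]
    simpa [mul_assoc] using hfe
  have hh1 : f * e = d := hduniq _ ⟨c1, c2⟩
  have hh2 : e * f = d := hduniq _ ⟨by rw [hef, hef], by rw [hef, hef]⟩
  exact hh2.trans hh1.symm

end DadeAux

/-- For a nonzero element `a` of a graded inverse semigroup, there is an inverse `a'`
with all the standard properties. -/
lemma dade_good_inv {Γ' : Type u} [Group Γ'] {S' : Type v} [SemigroupWithZero S']
    (g : Grading Γ' S')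
    (hinv : ∀ s : S', ∃! t : S', s * t * s = s ∧ t * s * t = t) {a : S'} (ha : a ≠ 0) :
    ∃ a' : S', a * a' * a = a ∧ a' * a * a' = a' ∧ (a * a') * (a * a') = a * a' ∧
      (a' * a) * (a' * a) = a' * a ∧ g.deg a' = (g.deg a)⁻¹ ∧ g.deg (a * a') = 1 ∧
      g.deg (a' * a) = 1 := by
  obtain ⟨a', ⟨i1, i2⟩, -⟩ := hinv a
  have idem1 : (a * a') * (a * a') = a * a' := by
    calc (a * a') * (a * a') = ((a * a') * a) * a' := (mul_assoc _ _ _).symm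
      _ = a * a' := by rw [i1]
  have idem2 : (a' * a) * (a' * a) = a' * a := by
    calc (a' * a) * (a' * a) = ((a' * a) * a') * a := (mul_assoc _ _ _).symm
      _ = a' * a := by rw [i2]
  have hne1 : a * a' ≠ 0 := fun h => ha (by rw [← i1, h, zero_mul])
  have hne2 : a' * a ≠ 0 := fun h => ha (by rw [← i1, mul_assoc, h, mul_zero])
  have e1 : g.deg a = g.deg (a * a') * g.deg a := by
    conv_lhs => rw [← i1]
    exact g.deg_mul (a * a') a (by rw [i1]; exact ha)
  have e3 : g.deg (a * a') = 1 := right_eq_mul.mp e1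
  have e2 : g.deg a * g.deg a' = 1 := (g.deg_mul a a' hne1).symm.trans e3
  have d5 : g.deg a' = (g.deg a)⁻¹ := eq_inv_of_mul_eq_one_right e2
  have d7 : g.deg (a' * a) = 1 := by rw [g.deg_mul a' a hne2, d5, inv_mul_cancel]
  exact ⟨a', i1, i2, idem1, idem2, d5, e3, d7⟩

/-- `S` with grading shifted by `β⁻¹` on the right, as a graded `S`-set over itself. -/
def dadeShiftSet {Γ' : Type u} [Group Γ'] {S' : Type v} [SemigroupWithZero S']
    (g : Grading Γ' S') (β : Γ') : GrSet g S' where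
  act s x := s * x
  act_mul s t x := (mul_assoc s t x).symm
  act_zero x := zero_mul x
  degX x := g.deg x * β⁻¹
  deg_act s x h := by
    show g.deg (s * x) * β⁻¹ = g.deg s * (g.deg x * β⁻¹)
    rw [g.deg_mul s x h, mul_assoc]

/-- **Dade's theorem for inverse semigroups** (Theorem `dadesthm`): a `Γ`-graded inverse
semigroup `S` is strongly graded if and only if the categories `Gr-S` and `Mod-S_ε` are
equivalent via the restriction and induction functors; equivalently (as formulated
here, with the natural transformation `μ` always being an isomorphism), iff the natural
map `ν_X : S ⊗_{S_ε} X_ε → X`, `s ⊗ x ↦ sx`, is bijective for every unital `Γ`-graded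
left `S`-set `X`. -/
theorem dade_for_inverse_semigroups {Γ' : Type u} [Group Γ'] {S' : Type v}
    [SemigroupWithZero S'] (g : Grading Γ' S')
    (hinv : ∀ s : S', ∃! t : S', s * t * s = s ∧ t * s * t = t) :
    g.IsStrong ↔
      ∀ (X : Type v) (_inst : Zero X) (A : GrSet g X),
        (∀ x : X, ∃ (s : S') (y : X), A.act s y = x) →
        Function.Bijective (nuMap A) := by
  constructor
  · -- strongly graded ⟹ every ν_X is bijective
    intro hstrong X instX A hA
    letI : Zero X := instX
    have act0 : ∀ s : S', A.act s (0 : X) = 0 := fun s => by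
      conv_lhs => rw [← A.act_zero (0 : X)]
      rw [A.act_mul, mul_zero, A.act_zero]
    have memXε : ∀ (s : S') (w : X), (s = 0 ∨ g.deg s = 1) → (w = 0 ∨ A.degX w = 1) →
        (A.act s w = 0 ∨ A.degX (A.act s w) = 1) := by
      intro s w hs hw
      by_cases h0 : A.act s w = 0
      · exact Or.inl h0
      right
      have hs' : g.deg s = 1 := hs.resolve_left fun e => h0 (by rw [e, A.act_zero])
      have hw' : A.degX w = 1 := hw.resolve_left fun e => h0 (by rw [e, act0])
      rw [A.deg_act s w h0, hs', hw', one_mul]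
    constructor
    · -- injectivity
      have hzero : ∀ p : S' × {x : X // x = 0 ∨ A.degX x = 1}, A.act p.1 (p.2 : X) = 0 →
          Quot.mk (nuRel A) p = Quot.mk (nuRel A) (0, ⟨0, Or.inl rfl⟩) := by
        rintro ⟨a, x⟩ hp
        have hp' : A.act a (x : X) = 0 := hp
        have step2 : ∀ c : S', Quot.mk (nuRel A) (c, ⟨0, Or.inl rfl⟩) =
            Quot.mk (nuRel A) (0, ⟨0, Or.inl rfl⟩) := fun c =>
          (Quot.sound ⟨0, Or.inl rfl, (mul_zero c).symm, (A.act_zero _).symm⟩).symm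
        by_cases ha : a = 0
        · subst ha
          exact Quot.sound ⟨0, Or.inl rfl, (mul_zero 0).symm, (A.act_zero _).symm⟩
        · obtain ⟨a', i1, i2, idm1, idm2, d5, d6, d7⟩ := dade_good_inv g hinv ha
          have ha_unit : a * (a' * a) = a := by rw [← mul_assoc]; exact i1
          have he0 : A.act (a' * a) (x : X) = 0 := by
            rw [← A.act_mul a' a, hp', act0]
          have step1 : Quot.mk (nuRel A) (a, x) = Quot.mk (nuRel A) (a, ⟨0, Or.inl rfl⟩) :=
            Quot.sound ⟨a' * a, Or.inr d7, ha_unit.symm, he0.symm⟩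
          exact step1.trans (step2 a)
      intro p q
      induction p using Quot.ind
      induction q using Quot.ind
      rename_i pa pb
      obtain ⟨a, x⟩ := pa
      obtain ⟨b, y⟩ := pb
      intro h
      have h' : A.act a (x : X) = A.act b (y : X) := h
      by_cases hz : A.act a (x : X) = 0
      · rw [hzero (a, x) hz, hzero (b, y) (h' ▸ hz)]
      · have hbz : A.act b (y : X) ≠ 0 := fun hh => hz (h'.trans hh)
        have ha0 : a ≠ 0 := fun e => hz (by rw [e, A.act_zero])
        have hb0 : b ≠ 0 := fun e => hbz (by rw [e, A.act_zero])
        have hx0 : (x : X) ≠ 0 := fun e => hz (by rw [e, act0])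
        have hy0 : (y : X) ≠ 0 := fun e => hbz (by rw [e, act0])
        have degx : A.degX (x : X) = 1 := x.2.resolve_left hx0
        have degy : A.degX (y : X) = 1 := y.2.resolve_left hy0
        have hab : g.deg a = g.deg b := by
          have d1 : A.degX (A.act a (x : X)) = g.deg a := by
            rw [A.deg_act a _ hz, degx, mul_one]
          have d2 : A.degX (A.act b (y : X)) = g.deg b := by
            rw [A.deg_act b _ hbz, degy, mul_one]
          rw [← d1, h', d2]
        obtain ⟨a', ia1, ia2, iA1, iA2, da', dA1, dA2⟩ := dade_good_inv g hinv ha0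
        obtain ⟨b', ib1, ib2, iB1, iB2, db', dB1, dB2⟩ := dade_good_inv g hinv hb0
        have ha_unit : a * (a' * a) = a := by rw [← mul_assoc]; exact ia1
        have hb_unit : b * (b' * b) = b := by rw [← mul_assoc]; exact ib1
        have comm : (a * a') * (b * b') = (b * b') * (a * a') := dade_idem_comm hinv iA1 iB1
        have memx₀ := memXε (a' * a) (x : X) (Or.inr dA2) x.2
        have memy₀ := memXε (b' * b) (y : X) (Or.inr dB2) y.2
        have memT : a' * b = 0 ∨ g.deg (a' * b) = 1 := by
          by_cases h0 : a' * b = 0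
          · exact Or.inl h0
          · exact Or.inr (by rw [g.deg_mul a' b h0, da', hab, inv_mul_cancel])
        have memS : b' * (a * (a' * b)) = 0 ∨ g.deg (b' * (a * (a' * b))) = 1 := by
          by_cases h0 : b' * (a * (a' * b)) = 0
          · exact Or.inl h0
          · refine Or.inr ?_
            have h1 : a * (a' * b) ≠ 0 := fun e => h0 (by rw [e, mul_zero])
            have h2 : a' * b ≠ 0 := fun e => h1 (by rw [e, mul_zero])
            rw [g.deg_mul b' _ h0, g.deg_mul a _ h1, g.deg_mul a' b h2, db', da', hab]
            group
        have hact1 : A.act (a' * b) (y : X) = A.act (a' * a) (x : X) := by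
          calc A.act (a' * b) (y : X) = A.act a' (A.act b (y : X)) := (A.act_mul _ _ _).symm
            _ = A.act a' (A.act a (x : X)) := by rw [← h']
            _ = A.act (a' * a) (x : X) := A.act_mul _ _ _
        have ht_e : (a' * b) * (b' * b) = a' * b := by rw [mul_assoc a' b, hb_unit]
        have pf3 : A.act (a' * b) (A.act (b' * b) (y : X)) = A.act (a' * a) (x : X) := by
          rw [A.act_mul (a' * b) (b' * b), ht_e, hact1]
        have hact2 : A.act (a * (a' * b)) (y : X) = A.act a (x : X) := by
          calc A.act (a * (a' * b)) (y : X)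
              = A.act a (A.act (a' * b) (y : X)) := (A.act_mul _ _ _).symm
            _ = A.act a (A.act (a' * a) (x : X)) := by rw [hact1]
            _ = A.act (a * (a' * a)) (x : X) := A.act_mul _ _ _
            _ = A.act a (x : X) := by rw [ha_unit]
        have hs_e : (b' * (a * (a' * b))) * (b' * b) = b' * (a * (a' * b)) := by
          rw [mul_assoc b', mul_assoc a, mul_assoc a' b, hb_unit]
        have pf4a : a * (a' * b) = b * (b' * (a * (a' * b))) := by
          symm
          calc b * (b' * (a * (a' * b)))
              = (b * b') * (a * (a' * b)) := (mul_assoc _ _ _).symm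
            _ = (b * b') * ((a * a') * b) := by rw [← mul_assoc a a' b]
            _ = ((b * b') * (a * a')) * b := (mul_assoc _ _ _).symm
            _ = ((a * a') * (b * b')) * b := by rw [← comm]
            _ = (a * a') * ((b * b') * b) := mul_assoc _ _ _
            _ = (a * a') * b := by rw [ib1]
            _ = a * (a' * b) := mul_assoc _ _ _
        have pf4b : A.act (b' * (a * (a' * b))) (A.act (b' * b) (y : X)) =
            A.act (b' * b) (y : X) := by
          rw [A.act_mul (b' * (a * (a' * b))) (b' * b), hs_e]
          calc A.act (b' * (a * (a' * b))) (y : X)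
              = A.act b' (A.act (a * (a' * b)) (y : X)) := (A.act_mul _ _ _).symm
            _ = A.act b' (A.act a (x : X)) := by rw [hact2]
            _ = A.act b' (A.act b (y : X)) := by rw [h']
            _ = A.act (b' * b) (y : X) := A.act_mul _ _ _
        have R1 : Quot.mk (nuRel A) (a, x) = Quot.mk (nuRel A) (a, ⟨_, memx₀⟩) :=
          Quot.sound ⟨a' * a, Or.inr dA2, ha_unit.symm, rfl⟩
        have R2 : Quot.mk (nuRel A) (b, y) = Quot.mk (nuRel A) (b, ⟨_, memy₀⟩) :=
          Quot.sound ⟨b' * b, Or.inr dB2, hb_unit.symm, rfl⟩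
        have R3 : Quot.mk (nuRel A) (a * (a' * b), ⟨_, memy₀⟩) =
            Quot.mk (nuRel A) (a, ⟨_, memx₀⟩) :=
          Quot.sound ⟨a' * b, memT, rfl, pf3.symm⟩
        have R4 : Quot.mk (nuRel A) (a * (a' * b), ⟨_, memy₀⟩) =
            Quot.mk (nuRel A) (b, ⟨_, memy₀⟩) :=
          Quot.sound ⟨b' * (a * (a' * b)), memS, pf4a, pf4b.symm⟩
        exact R1.trans (R3.symm.trans (R4.trans R2.symm))
    · -- surjectivity
      intro x
      by_cases hx : x = 0
      · refine ⟨Quot.mk _ (0, ⟨0, Or.inl rfl⟩), ?_⟩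
        show A.act 0 (0 : X) = x
        rw [A.act_zero]
        exact hx.symm
      · obtain ⟨s, y, hsy⟩ := hA x
        have hs0 : s ≠ 0 := fun e => hx (by rw [← hsy, e, A.act_zero])
        obtain ⟨s', is1, is2, iS1, iS2, ds', dS1, dS2⟩ := dade_good_inv g hinv hs0
        have hs_unit : s * (s' * s) = s := by rw [← mul_assoc]; exact is1
        have hsu : A.act s (A.act (s' * s) y) = x := by
          rw [A.act_mul s (s' * s), hs_unit, hsy]
        have hu0 : A.act (s' * s) y ≠ 0 := fun e => hx (by rw [← hsu, e, act0])
        have heu : A.act (s' * s) (A.act (s' * s) y) = A.act (s' * s) y := by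
          rw [A.act_mul (s' * s) (s' * s), iS2]
        have hmem : (s' * s) ∈ g.comp (A.degX (A.act (s' * s) y)) *
            g.comp (A.degX (A.act (s' * s) y))⁻¹ := by
          rw [hstrong]
          exact Or.inr (dS2.trans (mul_inv_cancel _).symm)
        obtain ⟨p, hp, q, hq, hpq⟩ := Set.mem_mul.1 hmem
        have hxw : A.act (s * p) (A.act q (A.act (s' * s) y)) = x := by
          rw [A.act_mul (s * p) q, mul_assoc s p q, hpq, ← A.act_mul s (s' * s), heu, hsu]
        have hw0 : A.act q (A.act (s' * s) y) ≠ 0 := fun e => hx (by rw [← hxw, e, act0])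
        have hq0 : q ≠ 0 := fun e => hw0 (by rw [e, A.act_zero])
        have hdw : A.degX (A.act q (A.act (s' * s) y)) = 1 := by
          rw [A.deg_act q _ hw0, hq.resolve_left hq0, inv_mul_cancel]
        exact ⟨Quot.mk _ (s * p, ⟨_, Or.inr hdw⟩), hxw⟩
  · -- every ν_X bijective ⟹ strongly graded
    intro H α β
    ext r
    simp only [Set.mem_mul, Grading.comp, Set.mem_setOf_eq]
    constructor
    · rintro ⟨s, hs, t, ht, rfl⟩
      by_cases h0 : s * t = 0
      · exact Or.inl h0
      · have hs0 : s ≠ 0 := fun e => h0 (by rw [e, zero_mul])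
        have ht0 : t ≠ 0 := fun e => h0 (by rw [e, mul_zero])
        exact Or.inr (by rw [g.deg_mul s t h0, hs.resolve_left hs0, ht.resolve_left ht0])
    · intro hr
      by_cases hr0 : r = 0
      · exact ⟨0, Or.inl rfl, 0, Or.inl rfl, by rw [hr0, mul_zero]⟩
      · have hdr : g.deg r = α * β := hr.resolve_left hr0
        have hAu : ∀ x : S', ∃ (s : S') (y : S'), (dadeShiftSet g β).act s y = x := by
          intro x
          by_cases h0 : x = 0
          · exact ⟨0, 0, by show (0 : S') * 0 = x; rw [h0, mul_zero]⟩
          · obtain ⟨x', ⟨hx1, -⟩, -⟩ := hinv x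
            exact ⟨x, x' * x, by show x * (x' * x) = x; rw [← mul_assoc]; exact hx1⟩
        obtain ⟨pq, hpq⟩ := (H S' _ (dadeShiftSet g β) hAu).2 r
        obtain ⟨⟨s, u⟩, rfl⟩ := Quot.exists_rep pq
        have hval : s * (u : S') = r := hpq
        have hu0 : (u : S') ≠ 0 := fun e => hr0 (by rw [← hval, e, mul_zero])
        have hdu : g.deg (u : S') = β := by
          have h2 : g.deg (u : S') * β⁻¹ = 1 := u.2.resolve_left hu0
          exact mul_inv_eq_one.mp h2
        have hds : g.deg s = α := by
          have h3 := g.deg_mul s (u : S') (by rw [hval]; exact hr0)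
          rw [hval, hdr, hdu] at h3
          exact mul_right_cancel h3.symm
        exact ⟨s, Or.inr hds, (u : S'), Or.inr hdu, hval⟩
end

section
/- Let S be a Γ-graded inverse semigroup equipped with a non-degenerate partial action on a nonempty set X. If S is strongly Γ-graded, then the groupoid of germs S ⋉ X is strongly Γ-graded in the induced grading [s,x] ↦ deg(s). -/
open Pointwise

/-- A partial action of a semigroup `S` on a set `X`: a zero-preserving semigroup
homomorphism `θ` into the symmetric inverse monoid `I(X)` of partial bijections of `X`
(with `θ(st) = θₛ ∘ θₜ`, i.e. `(θ t).trans (θ s)`, and the empty map `⊥` as zero). -/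
structure PartialAction (S : Type v) [SemigroupWithZero S] (X : Type x) where
  θ : S → (X ≃. X)
  map_mul : ∀ s t : S, θ (s * t) = (θ t).trans (θ s)
  map_zero : θ 0 = ⊥

variable {S : Type v} [SemigroupWithZero S] {X : Type x}

/-- Pairs `(s, x)` with `x ∈ X_s = Dom(θ_s)`, representing germs. -/
def GermBase (P : PartialAction S X) : Type max v x :=
  {p : S × X // (P.θ p.1 p.2).isSome}

/-- The germ equivalence: `(s, x) ∼ (t, y)` iff `x = y` and `se = te` for some
idempotent `e` with `x ∈ X_e`. -/
def GermRel (P : PartialAction S X) (p q : GermBase P) : Prop :=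
  p.1.2 = q.1.2 ∧ ∃ e : S, e * e = e ∧ (P.θ e p.1.2).isSome ∧ p.1.1 * e = q.1.1 * e

/-- The set of morphisms of the groupoid of germs `S ⋉ X`. -/
def Germ (P : PartialAction S X) : Type max v x := Quot (GermRel P)

/-- The component `(S ⋉ X)_α` of the induced grading `[s,x] ↦ deg s` on the groupoid of
germs. -/
def GermComp {Γ : Type u} [Group Γ] (g : Grading Γ S) (P : PartialAction S X) (α : Γ) :
    Set (Germ P) :=
  {m | ∃ p : GermBase P, g.deg p.1.1 = α ∧ m = Quot.mk (GermRel P) p}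

/-- The set `(S ⋉ X)_α (S ⋉ X)_β` of composable products of germs of degrees `α` and
`β`: `[s,x][t,y] = [st,y]` is defined when `d([s,x]) = x` equals `r([t,y]) = θ_t(y)`. -/
def GermProd {Γ : Type u} [Group Γ] (g : Grading Γ S) (P : PartialAction S X) (α β : Γ) :
    Set (Germ P) :=
  {m | ∃ (p q : GermBase P) (h : (P.θ (p.1.1 * q.1.1) q.1.2).isSome),
      g.deg p.1.1 = α ∧ g.deg q.1.1 = β ∧ P.θ q.1.1 q.1.2 = some p.1.2 ∧
      m = Quot.mk (GermRel P) ⟨(p.1.1 * q.1.1, q.1.2), h⟩}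

/-- Proposition `sthfyhry`: if a `Γ`-graded inverse semigroup `S` acting
non-degenerately and partially on a nonempty set `X` is strongly graded, then the
groupoid of germs `S ⋉ X` is strongly graded in the induced grading, i.e.
`(S⋉X)_α (S⋉X)_β = (S⋉X)_{αβ}` for all `α, β ∈ Γ`. -/
theorem germ_groupoid_strongly_graded {Γ : Type u} [Group Γ] {S : Type v}
    [SemigroupWithZero S] {X : Type x} [Nonempty X] (g : Grading Γ S)
    (hinv : ∀ s : S, ∃! t : S, s * t * s = s ∧ t * s * t = t)
    (P : PartialAction S X)
    (hnd : ∀ x : X, ∃ e : S, e * e = e ∧ (P.θ e x).isSome)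
    (hstr : g.IsStrong) :
    ∀ α β : Γ, GermProd g P α β = GermComp g P (α * β) := by
  intro α β
  ext m
  constructor
  · rintro ⟨p, q, h, hα, hβ, hq, rfl⟩
    refine ⟨⟨(p.1.1 * q.1.1, q.1.2), h⟩, ?_, rfl⟩
    have hne : p.1.1 * q.1.1 ≠ 0 := by
      intro h0
      rw [h0, P.map_zero] at h
      simp [PEquiv.bot_apply] at h
    rw [g.deg_mul _ _ hne, hα, hβ]
  · rintro ⟨⟨⟨u, x⟩, hux⟩, hdeg, rfl⟩
    have hune : u ≠ 0 := by
      intro h0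
      rw [h0, P.map_zero] at hux
      simp [PEquiv.bot_apply] at hux
    have humem : u ∈ g.comp (α * β) := Or.inr hdeg
    rw [← hstr α β] at humem
    obtain ⟨s, hs, t, ht, hst⟩ := humem
    subst hst
    have hsne : s ≠ 0 := fun h0 => hune (by simp [h0])
    have htne : t ≠ 0 := fun h0 => hune (by simp [h0])
    have hsα : g.deg s = α := hs.resolve_left hsne
    have htβ : g.deg t = β := ht.resolve_left htne
    have hux' : ((P.θ t x).bind (P.θ s)).isSome := by
      have := hux
      rw [P.map_mul] at this
      exact this
    obtain ⟨y, hy⟩ : ∃ y, P.θ t x = some y := by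
      cases hty : P.θ t x with
      | none => rw [hty] at hux'; simp at hux'
      | some y => exact ⟨y, rfl⟩
    have hsy : (P.θ s y).isSome := by
      rw [hy] at hux'; simpa using hux'
    have hty : (P.θ t x).isSome := by rw [hy]; rfl
    exact ⟨⟨(s, y), hsy⟩, ⟨(t, x), hty⟩, hux, hsα, htβ, hy, rfl⟩
end

section
/- Let E be a directed graph. Then the graph inverse semigroup S(E) is strongly graded in the natural ℤ-grading if and only if E is the empty graph. -/
/-! Graph inverse semigroups, modelled concretely: a graph is given by `src rng : E → V`;
a nonzero element of `S(E)` is (uniquely) `x y⁻¹` for paths `x, y` with `r(x) = r(y)`,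
recorded as a pair of pairs (starting vertex, edge list); the zero element is `none`.
The set of (valid representations of) elements of `S(E)` is carved out by `ValidGIS`. -/

variable {V : Type u} {E : Type u}

/-- `goodFrom src rng v l`: the edge list `l` forms a path starting at the vertex `v`. -/
def goodFrom (src rng : E → V) : V → List E → Prop
  | _, [] => True
  | v, e :: l => src e = v ∧ goodFrom src rng (rng e) l

/-- The end (range) vertex of the path starting at `v` with edge list `l`. -/
def pend (rng : E → V) : V → List E → V
  | v, [] => v
  | _, e :: l => pend rng (rng e) l

/-- Raw carrier for the graph inverse semigroup `S(E)`: `some ((a, xs), (b, ys))`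
represents `x y⁻¹` where `x` is the path `(a, xs)` and `y` is the path `(b, ys)`;
`none` is the zero. -/
abbrev RawGIS (V E : Type u) : Type u := Option ((V × List E) × (V × List E))

/-- Validity of a raw element: both components are paths and they have the same range. -/
def ValidGIS (src rng : E → V) : RawGIS V E → Prop
  | none => True
  | some (x, y) =>
      goodFrom src rng x.1 x.2 ∧ goodFrom src rng y.1 y.2 ∧
        pend rng x.1 x.2 = pend rng y.1 y.2

open Classical in
/-- Multiplication in `S(E)`:
`(x y⁻¹)(u w⁻¹) = (xz) w⁻¹` if `u = yz`, `x (wz)⁻¹` if `y = uz`, and `0` otherwise. -/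
noncomputable def gmul : RawGIS V E → RawGIS V E → RawGIS V E
  | some (x, y), some (u, w) =>
      if y.1 = u.1 ∧ y.2 <+: u.2 then
        some ((x.1, x.2 ++ u.2.drop y.2.length), w)
      else if u.1 = y.1 ∧ u.2 <+: y.2 then
        some (x, (w.1, w.2 ++ y.2.drop u.2.length))
      else none
  | _, _ => none

/-- The natural `ℤ`-degree: `deg (x y⁻¹) = |x| - |y|`. -/
def degZ : RawGIS V E → ℤ
  | some (x, y) => (x.2.length : ℤ) - (y.2.length : ℤ)
  | none => 0

/-- The component `S(E)_n` of the natural `ℤ`-grading of `S(E)` (as a subset of the raw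
carrier, consisting of the zero together with the valid elements of degree `n`). -/
def compZ (src rng : E → V) (n : ℤ) : Set (RawGIS V E) :=
  {a | a = none ∨ (ValidGIS src rng a ∧ degZ a = n)}

/-- Corollary `usual-grading`: the graph inverse semigroup `S(E)` is strongly graded in
the natural `ℤ`-grading if and only if the graph `E` is empty. -/
theorem gis_strongly_naturally_graded_iff_empty {V E : Type u} (src rng : E → V) :
    (∀ m n : ℤ,
        Set.image2 gmul (compZ src rng m) (compZ src rng n) = compZ src rng (m + n)) ↔
      IsEmpty V := by
  constructor
  · intro h
    by_contra hne
    rw [not_isEmpty_iff] at hne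
    obtain ⟨v⟩ := hne
    have hv : (some ((v, ([] : List E)), (v, ([] : List E))) : RawGIS V E) ∈
        compZ src rng (1 + -1) := by
      right
      exact ⟨⟨trivial, trivial, rfl⟩, by simp [degZ]⟩
    rw [← h 1 (-1)] at hv
    obtain ⟨a, ha, b, hb, hab⟩ := hv
    match a, b with
    | none, none => simp [gmul] at hab
    | none, some _ => simp [gmul] at hab
    | some _, none => simp [gmul] at hab
    | some (x, y), some (u, w) =>
      have hdeg : (x.2.length : ℤ) - (y.2.length : ℤ) = 1 := by
        rcases ha with h0 | ⟨_, hd⟩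
        · exact absurd h0 (by simp)
        · exact hd
      simp only [gmul] at hab
      split_ifs at hab with h1 h2
      · have hx : x.2 ++ u.2.drop y.2.length = [] := by
          have := (Option.some_injective _ hab)
          exact congrArg Prod.snd (congrArg Prod.fst this)
        have : x.2 = [] := (List.append_eq_nil_iff.mp hx).1
        rw [this] at hdeg
        simp at hdeg
        omega
      · have hx : x.2 = [] := by
          have := (Option.some_injective _ hab)
          exact congrArg Prod.snd (congrArg Prod.fst this)
        rw [hx] at hdeg
        simp at hdeg
        omega

  · intro h m n
    have hall : ∀ a : RawGIS V E, a = none := by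
      rintro (_ | ⟨⟨⟨v, _⟩, _⟩⟩)
      · rfl
      · exact (h.false v).elim
    ext a
    simp only [Set.mem_image2]
    constructor
    · intro _
      exact Or.inl (hall a)
    · intro _
      refine ⟨none, Or.inl rfl, none, Or.inl rfl, ?_⟩
      rw [hall a]
      rfl
end
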